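/- arXiv:1310.1036 — 3 statements merged into one kernel-verified Lean document; each statement's English description precedes it below -/
import Mathlib

section
/- Preservation of logical information: for every two-qubit Pauli operator P = P₁ ⊗ P₂ (Pᵢ ∈ {I, X, Y, Z}) with logical counterpart P̄ = P̄₁ P̄₂, every two-qubit state |Ψ⟩ on the qubits A1, A2, every density matrix ρ_D on the D-qubits, and every t ≥ 0, one has tr(P̄ · e^{tL}(ρ₀)) = ⟨Ψ| P |Ψ⟩, where ρ₀ is the initial state built from |Ψ⟩ and ρ_D. -/
open scoped Matrix ComplexOrder

attribute [local instance] Matrix.normedAddCommGroup Matrix.normedSpace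

namespace Toric

variable (L : ℕ) [NeZero L]

/-- Vertices of the periodic `L × L` lattice. -/
abbrev V := ZMod L × ZMod L

/-- Edges: `(v, 0)` is the horizontal edge from `v` to `v + (1,0)`,
`(v, 1)` the vertical edge from `v` to `v + (0,1)`. -/
abbrev E := V L × Fin 2

/-- Operators on the `2L²` qubits: complex matrices indexed by `E → Fin 2`. -/
abbrev Op := Matrix (E L → Fin 2) (E L → Fin 2) ℂ

/-- Pauli `X` on edge `e`. -/
noncomputable def Xop (e : E L) : Op L := fun σ τ =>
  if τ e = 1 - σ e ∧ ∀ e' ≠ e, τ e' = σ e' then 1 else 0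

/-- Pauli `Z` on edge `e`. -/
noncomputable def Zop (e : E L) : Op L :=
  Matrix.diagonal fun σ => (-1 : ℂ) ^ (σ e : ℕ)

/-- Vertex stabilizer at `v`. -/
noncomputable def Sv (v : V L) : Op L :=
  Xop L (v, 0) * Xop L (v, 1) * Xop L (v - (1, 0), 0) * Xop L (v - (0, 1), 1)

/-- Plaquette stabilizer with south-west corner `v`. -/
noncomputable def Sp (v : V L) : Op L :=
  Zop L (v, 0) * Zop L (v, 1) * Zop L (v + (1, 0), 1) * Zop L (v + (0, 1), 0)

/-- Index set of stabilizer generators: `inl v` is the vertex generator at `v`,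
`inr v` is the plaquette generator `p(v)`. -/
abbrev Gen := V L ⊕ V L

/-- The stabilizer associated with a generator index. -/
noncomputable def stab : Gen L → Op L
  | Sum.inl v => Sv L v
  | Sum.inr v => Sp L v

/-- The starred vertex `v* = (1,1)`. -/
def vStar : Gen L := Sum.inl (1, 1)

/-- The starred plaquette `p* = p(0,0)`. -/
def pStar : Gen L := Sum.inr (0, 0)

/-- The correction operators. -/
noncomputable def corr : Gen L → Op L
  | Sum.inl (r, s) =>
      if (r, s) = ((1 : ZMod L), (1 : ZMod L)) then 1
      else if s ≠ 1 then Zop L ((r, s - 1), 1)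
      else Zop L ((r - 1, 1), 0)
  | Sum.inr (r, s) =>
      if (r, s) = ((0 : ZMod L), (0 : ZMod L)) then 1
      else if s ≠ 0 then Xop L ((r, s + 1), 0)
      else Xop L ((r + 1, 0), 1)

/-- `P_j^+ = (I + S_j)/2`. -/
noncomputable def Pplus (j : Gen L) : Op L := (2⁻¹ : ℂ) • (1 + stab L j)

/-- `P_j^- = (I - S_j)/2`. -/
noncomputable def Pminus (j : Gen L) : Op L := (2⁻¹ : ℂ) • (1 - stab L j)

/-- The correction channel `T_j(ρ) = P_j⁺ ρ P_j⁺ + C_j P_j⁻ ρ P_j⁻ C_j†` as a linear map. -/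
noncomputable def Tj (j : Gen L) : Op L →ₗ[ℂ] Op L :=
  LinearMap.comp (LinearMap.mulLeft ℂ (Pplus L j)) (LinearMap.mulRight ℂ (Pplus L j)) +
  LinearMap.comp (LinearMap.mulLeft ℂ (corr L j * Pminus L j))
    (LinearMap.mulRight ℂ (Pminus L j * (corr L j)ᴴ))

/-- The Liouvillian `L(ρ) = Σ_j (T_j(ρ) - ρ)`. -/
noncomputable def Liou : Op L →ₗ[ℂ] Op L :=
  ∑ j : Gen L, (Tj L j - LinearMap.id)

/-- The evolution `e^{tL}`. -/
noncomputable def expL (t : ℝ) : Op L →L[ℂ] Op L :=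
  @NormedSpace.exp _ _ _
    (by exact @NonUnitalSeminormedRing.toIsTopologicalRing _ (ContinuousLinearMap.toSeminormedRing (E := Op L) (𝕜 := ℂ)).toNonUnitalSeminormedRing)
    ((t : ℂ) • (Liou L).toContinuousLinearMap)

/-- Product of a finite family of (commuting) operators, taken in some fixed enumeration order. -/
noncomputable def listProd {ι : Type*} [Fintype ι] (f : ι → Op L) : Op L :=
  ((Finset.univ : Finset ι).toList.map f).prod

/-- Logical `X̄₁`. -/
noncomputable def X1bar : Op L := listProd L fun s : ZMod L => Xop L ((0, s), 0)

/-- Logical `Z̄₁`. -/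
noncomputable def Z1bar : Op L := listProd L fun r : ZMod L => Zop L ((r, 1), 0)

/-- Logical `X̄₂`. -/
noncomputable def X2bar : Op L := listProd L fun r : ZMod L => Xop L ((r, 0), 1)

/-- Logical `Z̄₂`. -/
noncomputable def Z2bar : Op L := listProd L fun s : ZMod L => Zop L ((1, s), 1)

/-- The single-qubit Pauli matrices `I, X, Y, Z`. -/
noncomputable def pauli : Fin 4 → Matrix (Fin 2) (Fin 2) ℂ :=
  ![1, !![0, 1; 1, 0], !![0, -Complex.I; Complex.I, 0], !![1, 0; 0, -1]]

/-- Logical counterparts `Ī, X̄₁, Ȳ₁, Z̄₁` on the first logical qubit. -/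
noncomputable def logical1 : Fin 4 → Op L :=
  ![1, X1bar L, Complex.I • (X1bar L * Z1bar L), Z1bar L]

/-- Logical counterparts `Ī, X̄₂, Ȳ₂, Z̄₂` on the second logical qubit. -/
noncomputable def logical2 : Fin 4 → Op L :=
  ![1, X2bar L, Complex.I • (X2bar L * Z2bar L), Z2bar L]

/-- Logical counterpart `P̄ = P̄₁ P̄₂` of the two-qubit Pauli indexed by `(a, b)`. -/
noncomputable def logicalP (a b : Fin 4) : Op L := logical1 L a * logical2 L b

/-- `⟨Ψ| P₁ ⊗ P₂ |Ψ⟩` for the two-qubit Pauli indexed by `(a, b)`. -/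
noncomputable def expval (Ψ : Fin 2 → Fin 2 → ℂ) (a b : Fin 4) : ℂ :=
  ∑ x : Fin 2, ∑ x' : Fin 2, ∑ y : Fin 2, ∑ y' : Fin 2,
    (starRingEnd ℂ) (Ψ x y) * pauli a x x' * pauli b y y' * Ψ x' y'

/-- The qubit `A₁`. -/
def A1 : E L := (((0 : ZMod L), (1 : ZMod L)), 0)

/-- The qubit `A₂`. -/
def A2 : E L := (((1 : ZMod L), (0 : ZMod L)), 1)

/-- The qubits `B = {((0,s),0) : s ≠ 1}`. -/
def Bfin : Finset (E L) :=
  (Finset.univ.filter fun s : ZMod L => s ≠ 1).image fun s => (((0 : ZMod L), s), (0 : Fin 2))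

/-- The qubits `C = {((r,1),0) : r ≠ 0}`. -/
def Cfin : Finset (E L) :=
  (Finset.univ.filter fun r : ZMod L => r ≠ 0).image fun r => ((r, (1 : ZMod L)), (0 : Fin 2))

/-- The qubits `B' = {((r,0),1) : r ≠ 1}`. -/
def B'fin : Finset (E L) :=
  (Finset.univ.filter fun r : ZMod L => r ≠ 1).image fun r => ((r, (0 : ZMod L)), (1 : Fin 2))

/-- The qubits `C' = {((1,s),1) : s ≠ 0}`. -/
def C'fin : Finset (E L) :=
  (Finset.univ.filter fun s : ZMod L => s ≠ 0).image fun s => (((1 : ZMod L), s), (1 : Fin 2))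

/-- The remaining qubits `D`. -/
def Dfin : Finset (E L) :=
  Finset.univ \ ({A1 L, A2 L} ∪ Bfin L ∪ B'fin L ∪ Cfin L ∪ C'fin L)

/-- The initial state `ρ₀`: `|Ψ⟩⟨Ψ|` on `A₁A₂`, `|+⟩⟨+|` on `B ∪ B'`, `|0⟩⟨0|` on `C ∪ C'`,
and the arbitrary state `ρ_D` on the remaining qubits `D`. -/
noncomputable def rho0 (Ψ : Fin 2 → Fin 2 → ℂ)
    (ρD : Matrix ({e // e ∈ Dfin L} → Fin 2) ({e // e ∈ Dfin L} → Fin 2) ℂ) : Op L :=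
  fun σ τ =>
    Ψ (σ (A1 L)) (σ (A2 L)) * (starRingEnd ℂ) (Ψ (τ (A1 L)) (τ (A2 L))) *
    (∏ _e ∈ Bfin L ∪ B'fin L, (2⁻¹ : ℂ)) *
    (∏ e ∈ Cfin L ∪ C'fin L, if σ e = 0 ∧ τ e = 0 then (1 : ℂ) else 0) *
    ρD (fun d => σ d.1) (fun d => τ d.1)

/-- The projection `Q` onto the code space. -/
noncomputable def Qproj : Op L := listProd L fun j : Gen L => Pplus L j

/-- The projection `Q⊥ = I - Q` onto the orthogonal complement of the code space. -/
noncomputable def Qperp : Op L := 1 - Qproj L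

end Toric

/-- The trace norm `‖A‖₁ = tr √(AᴴA)`. -/
noncomputable def traceNorm {m : Type*} [Fintype m] [DecidableEq m] (A : Matrix m m ℂ) : ℝ :=
  (((Matrix.posSemidef_conjTranspose_mul_self A).1.eigenvectorUnitary.1 *
      Matrix.diagonal ((fun x : ℝ => (x : ℂ)) ∘ (√·) ∘ (Matrix.posSemidef_conjTranspose_mul_self A).1.eigenvalues) *
      (star (Matrix.posSemidef_conjTranspose_mul_self A).1.eigenvectorUnitary : Matrix m m ℂ)).trace).re

namespace TP
set_option linter.unusedSectionVars false
set_option linter.unusedVariables false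
open Toric

lemma fin2_add_self (a : Fin 2) : a + a = 0 := by fin_cases a <;> rfl
lemma fin2_one_sub (a : Fin 2) : 1 - a = a + 1 := by fin_cases a <;> rfl

lemma pow_fin_add (a b c : Fin 2) :
    (-1 : ℂ) ^ (((a + b) : Fin 2).val * c.val)
      = (-1) ^ (a.val * c.val) * (-1) ^ (b.val * c.val) := by
  fin_cases a <;> fin_cases b <;> fin_cases c <;> norm_num [Fin.add_def]

variable (L : ℕ) [NeZero L]

def δ (e : E L) : E L → Fin 2 := fun e' => if e' = e then 1 else 0

lemma addfun_add_self (x : E L → Fin 2) : x + x = 0 :=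
  funext fun e => fin2_add_self _

noncomputable def sgn (z x : E L → Fin 2) : ℂ :=
  ∏ e, (-1 : ℂ) ^ ((z e).val * (x e).val)

lemma sgn_comm (z x : E L → Fin 2) : sgn L z x = sgn L x z := by
  unfold sgn; refine Finset.prod_congr rfl fun e _ => by rw [Nat.mul_comm]

lemma sgn_zero_left (x : E L → Fin 2) : sgn L 0 x = 1 := by
  unfold sgn; simp

lemma sgn_zero_right (z : E L → Fin 2) : sgn L z 0 = 1 := by
  unfold sgn; simp

lemma sgn_add_left (z z' x : E L → Fin 2) :
    sgn L (z + z') x = sgn L z x * sgn L z' x := by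
  unfold sgn
  rw [← Finset.prod_mul_distrib]
  exact Finset.prod_congr rfl fun e _ => pow_fin_add _ _ _

lemma sgn_add_right (z x x' : E L → Fin 2) :
    sgn L z (x + x') = sgn L z x * sgn L z x' := by
  rw [sgn_comm, sgn_add_left, sgn_comm L x z, sgn_comm L x' z]

lemma sgn_delta_left (e : E L) (x : E L → Fin 2) :
    sgn L (δ L e) x = (-1 : ℂ) ^ ((x e).val) := by
  unfold sgn
  rw [Finset.prod_eq_single e]
  · simp [δ]
  · intro e' _ h; simp [δ, h]
  · intro h; exact absurd (Finset.mem_univ e) h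

lemma sgn_delta_right (e : E L) (z : E L → Fin 2) :
    sgn L z (δ L e) = (-1 : ℂ) ^ ((z e).val) := by
  rw [sgn_comm, sgn_delta_left]

lemma sgn_eq_one (z x : E L → Fin 2) (h : ∀ e, (z e).val * (x e).val = 0) :
    sgn L z x = 1 := by
  unfold sgn
  exact Finset.prod_eq_one fun e _ => by rw [h e]; norm_num

lemma star_sgn (z x : E L → Fin 2) : star (sgn L z x) = sgn L z x := by
  unfold sgn
  rw [star_prod]
  exact Finset.prod_congr rfl fun e _ => by
    rw [show star ((-1:ℂ) ^ ((z e).val * (x e).val)) = (star (-1:ℂ)) ^ ((z e).val * (x e).val) from star_pow _ _]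
    norm_num

lemma sgn_mul_self (z x : E L → Fin 2) : sgn L z x * sgn L z x = 1 := by
  unfold sgn
  rw [← Finset.prod_mul_distrib]
  exact Finset.prod_eq_one fun e _ => by rw [← mul_pow]; norm_num

noncomputable def W (x z : E L → Fin 2) : Op L :=
  fun σ τ => if τ = σ + x then sgn L z σ else 0

lemma W_one : W L 0 0 = (1 : Op L) := by
  funext σ τ
  simp only [W, Matrix.one_apply, add_zero, sgn_zero_left]
  by_cases h : τ = σ
  · simp [h]
  · rw [if_neg h, if_neg fun hh => h hh.symm]

lemma W_mul (x z x' z' : E L → Fin 2) :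
    W L x z * W L x' z' = sgn L z' x • W L (x + x') (z + z') := by
  funext σ τ
  rw [Matrix.mul_apply]
  simp only [W, Matrix.smul_apply, smul_eq_mul]
  rw [Finset.sum_eq_single (σ + x)]
  · by_cases h : τ = σ + x + x'
    · rw [if_pos rfl, if_pos h, if_pos (by rw [h, add_assoc]),
        sgn_add_right, sgn_add_left]
      ring
    · rw [if_pos rfl, if_neg h, if_neg (by rw [← add_assoc]; exact h), mul_zero, mul_zero]
  · intro μ _ hμ
    rw [if_neg hμ, zero_mul]
  · intro h; exact absurd (Finset.mem_univ _) h

lemma W_sq (x z : E L → Fin 2) : W L x z * W L x z = sgn L z x • 1 := by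
  rw [W_mul, addfun_add_self, addfun_add_self, W_one]

lemma W_herm (x z : E L → Fin 2) : (W L x z)ᴴ = sgn L z x • W L x z := by
  funext σ τ
  simp only [Matrix.conjTranspose_apply, W, Matrix.smul_apply, smul_eq_mul]
  by_cases h : τ = σ + x
  · have h' : σ = τ + x := by rw [h, add_assoc, addfun_add_self, add_zero]
    rw [if_pos h', if_pos h, h', star_sgn L z τ, sgn_add_right,
      show sgn L z x * (sgn L z τ * sgn L z x) = sgn L z τ * (sgn L z x * sgn L z x) from by ring,
      sgn_mul_self, mul_one]
  · have h' : ¬ σ = τ + x := fun hh => h (by rw [hh, add_assoc, addfun_add_self, add_zero])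
    rw [if_neg h', if_neg h, star_zero, mul_zero]

lemma Xop_eq (e : E L) : Xop L e = W L (δ L e) 0 := by
  funext σ τ
  simp only [Xop, W, sgn_zero_left]
  congr 1
  rw [eq_iff_iff]
  constructor
  · rintro ⟨h1, h2⟩
    funext e'
    by_cases he : e' = e
    · subst he; simp [δ, h1, fin2_one_sub]
    · simp [δ, he, h2 e' he]
  · intro h
    subst h
    constructor
    · simp [δ, fin2_one_sub]
    · intro e' he; simp [δ, he]

lemma Zop_eq (e : E L) : Zop L e = W L 0 (δ L e) := by
  funext σ τ
  simp only [Zop, W, Matrix.diagonal_apply, add_zero]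
  rw [sgn_delta_left]
  by_cases h : τ = σ
  · rw [if_pos h.symm, if_pos h]
  · rw [if_neg (fun hh => h hh.symm), if_neg h]

lemma listW_X {ι : Type*} (g : ι → E L) (l : List ι) :
    (l.map (fun i => Xop L (g i))).prod = W L (l.map (fun i => δ L (g i))).sum 0 := by
  induction l with
  | nil => simp [W_one]
  | cons a l ih =>
      rw [List.map_cons, List.prod_cons, ih, Xop_eq, W_mul, List.map_cons, List.sum_cons,
        sgn_zero_left, one_smul, add_zero]

lemma listW_Z {ι : Type*} (g : ι → E L) (l : List ι) :
    (l.map (fun i => Zop L (g i))).prod = W L 0 (l.map (fun i => δ L (g i))).sum := by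
  induction l with
  | nil => simp [W_one]
  | cons a l ih =>
      rw [List.map_cons, List.prod_cons, ih, Zop_eq, W_mul, List.map_cons, List.sum_cons,
        sgn_zero_right, one_smul, add_zero]

lemma listProd_X {ι : Type*} [Fintype ι] (g : ι → E L) :
    listProd L (fun i => Xop L (g i)) = W L (∑ i, δ L (g i)) 0 := by
  rw [listProd, listW_X, Finset.sum_map_toList]

lemma listProd_Z {ι : Type*} [Fintype ι] (g : ι → E L) :
    listProd L (fun i => Zop L (g i)) = W L 0 (∑ i, δ L (g i)) := by
  rw [listProd, listW_Z, Finset.sum_map_toList]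

/-- support vector of `X̄₁` -/
def x1 : E L → Fin 2 := fun e => if e.1.1 = 0 ∧ e.2 = 0 then 1 else 0
/-- support vector of `Z̄₁` -/
def z1 : E L → Fin 2 := fun e => if e.1.2 = 1 ∧ e.2 = 0 then 1 else 0
/-- support vector of `X̄₂` -/
def x2 : E L → Fin 2 := fun e => if e.1.2 = 0 ∧ e.2 = 1 then 1 else 0
/-- support vector of `Z̄₂` -/
def z2 : E L → Fin 2 := fun e => if e.1.1 = 1 ∧ e.2 = 1 then 1 else 0

lemma sum_delta_row (f : ZMod L → E L) (hf : Function.Injective f)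
    (v : E L → Fin 2) (hv : ∀ e, v e = if ∃ s, e = f s then 1 else 0) :
    (∑ s, δ L (f s)) = v := by
  funext e
  rw [Finset.sum_apply, hv]
  by_cases h : ∃ s, e = f s
  · obtain ⟨s0, rfl⟩ := h
    rw [if_pos ⟨s0, rfl⟩, Finset.sum_eq_single s0]
    · simp [δ]
    · intro s _ hs
      simp only [δ]
      rw [if_neg (fun hh => hs ((hf hh).symm))]
    · intro h; exact absurd (Finset.mem_univ _) h
  · rw [if_neg h]
    refine Finset.sum_eq_zero fun s _ => ?_
    simp only [δ]
    rw [if_neg (fun hh => h ⟨s, hh⟩)]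

lemma sum_x1 : (∑ s : ZMod L, δ L ((0, s), 0)) = x1 L := by
  refine sum_delta_row L (fun s => ((0, s), 0)) (fun a b h => by
    simpa using congrArg (fun e => e.1.2) h) _ (fun e => ?_)
  obtain ⟨⟨r, s⟩, i⟩ := e
  simp only [x1]
  by_cases hr : r = 0 <;> by_cases hi : i = 0
  · subst hr; subst hi; rw [if_pos ⟨rfl, rfl⟩, if_pos ⟨s, rfl⟩]
  · subst hr; rw [if_neg (fun h => hi h.2), if_neg (by rintro ⟨s', h⟩; exact hi (by simpa using congrArg (fun e => e.2) h))]
  · rw [if_neg (fun h => hr h.1), if_neg (by rintro ⟨s', h⟩; exact hr (by simpa using congrArg (fun e => e.1.1) h))]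
  · rw [if_neg (fun h => hr h.1), if_neg (by rintro ⟨s', h⟩; exact hr (by simpa using congrArg (fun e => e.1.1) h))]

lemma sum_z1 : (∑ r : ZMod L, δ L ((r, 1), 0)) = z1 L := by
  refine sum_delta_row L (fun r => ((r, 1), 0)) (fun a b h => by
    simpa using congrArg (fun e => e.1.1) h) _ (fun e => ?_)
  obtain ⟨⟨r, s⟩, i⟩ := e
  simp only [z1]
  by_cases hs : s = 1 <;> by_cases hi : i = 0
  · subst hs; subst hi; rw [if_pos ⟨rfl, rfl⟩, if_pos ⟨r, rfl⟩]
  · subst hs; rw [if_neg (fun h => hi h.2), if_neg (by rintro ⟨r', h⟩; exact hi (by simpa using congrArg (fun e => e.2) h))]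
  · rw [if_neg (fun h => hs h.1), if_neg (by rintro ⟨r', h⟩; exact hs (by simpa using congrArg (fun e => e.1.2) h))]
  · rw [if_neg (fun h => hs h.1), if_neg (by rintro ⟨r', h⟩; exact hs (by simpa using congrArg (fun e => e.1.2) h))]

lemma sum_x2 : (∑ r : ZMod L, δ L ((r, 0), 1)) = x2 L := by
  refine sum_delta_row L (fun r => ((r, 0), 1)) (fun a b h => by
    simpa using congrArg (fun e => e.1.1) h) _ (fun e => ?_)
  obtain ⟨⟨r, s⟩, i⟩ := e
  simp only [x2]
  by_cases hs : s = 0 <;> by_cases hi : i = 1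
  · subst hs; subst hi; rw [if_pos ⟨rfl, rfl⟩, if_pos ⟨r, rfl⟩]
  · subst hs; rw [if_neg (fun h => hi h.2), if_neg (by rintro ⟨r', h⟩; exact hi (by simpa using congrArg (fun e => e.2) h))]
  · rw [if_neg (fun h => hs h.1), if_neg (by rintro ⟨r', h⟩; exact hs (by simpa using congrArg (fun e => e.1.2) h))]
  · rw [if_neg (fun h => hs h.1), if_neg (by rintro ⟨r', h⟩; exact hs (by simpa using congrArg (fun e => e.1.2) h))]

lemma sum_z2 : (∑ s : ZMod L, δ L ((1, s), 1)) = z2 L := by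
  refine sum_delta_row L (fun s => ((1, s), 1)) (fun a b h => by
    simpa using congrArg (fun e => e.1.2) h) _ (fun e => ?_)
  obtain ⟨⟨r, s⟩, i⟩ := e
  simp only [z2]
  by_cases hr : r = 1 <;> by_cases hi : i = 1
  · subst hr; subst hi; rw [if_pos ⟨rfl, rfl⟩, if_pos ⟨s, rfl⟩]
  · subst hr; rw [if_neg (fun h => hi h.2), if_neg (by rintro ⟨s', h⟩; exact hi (by simpa using congrArg (fun e => e.2) h))]
  · rw [if_neg (fun h => hr h.1), if_neg (by rintro ⟨s', h⟩; exact hr (by simpa using congrArg (fun e => e.1.1) h))]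
  · rw [if_neg (fun h => hr h.1), if_neg (by rintro ⟨s', h⟩; exact hr (by simpa using congrArg (fun e => e.1.1) h))]

lemma X1bar_eq : X1bar L = W L (x1 L) 0 := by
  rw [X1bar, listProd_X, sum_x1]

lemma Z1bar_eq : Z1bar L = W L 0 (z1 L) := by
  rw [Z1bar, listProd_Z, sum_z1]

lemma X2bar_eq : X2bar L = W L (x2 L) 0 := by
  rw [X2bar, listProd_X, sum_x2]

lemma Z2bar_eq : Z2bar L = W L 0 (z2 L) := by
  rw [Z2bar, listProd_Z, sum_z2]

/-- x-vector of the vertex stabilizer -/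
def xS (v : V L) : E L → Fin 2 :=
  δ L (v, 0) + δ L (v, 1) + δ L (v - (1, 0), 0) + δ L (v - (0, 1), 1)

/-- z-vector of the plaquette stabilizer -/
def zS (v : V L) : E L → Fin 2 :=
  δ L (v, 0) + δ L (v, 1) + δ L (v + (1, 0), 1) + δ L (v + (0, 1), 0)

lemma Sv_eq (v : V L) : Sv L v = W L (xS L v) 0 := by
  rw [Sv, Xop_eq, Xop_eq, Xop_eq, Xop_eq]
  simp only [W_mul, add_zero, zero_add, sgn_zero_left, sgn_zero_right, one_smul]
  rfl

lemma Sp_eq (v : V L) : Sp L v = W L 0 (zS L v) := by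
  rw [Sp, Zop_eq, Zop_eq, Zop_eq, Zop_eq]
  simp only [W_mul, add_zero, zero_add, sgn_zero_left, sgn_zero_right, one_smul]
  rfl

/-! ### sign (parity) computations -/

lemma z1_mul_x1 (e : E L) :
    (z1 L e).val * (x1 L e).val = if e = (((0:ZMod L), (1:ZMod L)), (0:Fin 2)) then 1 else 0 := by
  obtain ⟨⟨r, s⟩, i⟩ := e
  simp only [z1, x1, Prod.mk.injEq]
  by_cases hr : r = 0 <;> by_cases hs : s = 1 <;> by_cases hi : i = 0 <;>
    simp [hr, hs, hi]

lemma z2_mul_x2 (e : E L) :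
    (z2 L e).val * (x2 L e).val = if e = (((1:ZMod L), (0:ZMod L)), (1:Fin 2)) then 1 else 0 := by
  obtain ⟨⟨r, s⟩, i⟩ := e
  simp only [z2, x2, Prod.mk.injEq]
  by_cases hr : r = 1 <;> by_cases hs : s = 0 <;> by_cases hi : i = 1 <;>
    simp [hr, hs, hi]

lemma sgn_of_point (z x : E L → Fin 2) (p : E L)
    (h : ∀ e, (z e).val * (x e).val = if e = p then 1 else 0) :
    sgn L z x = -1 := by
  unfold sgn
  rw [Finset.prod_eq_single p]
  · rw [h p, if_pos rfl, pow_one]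
  · intro e _ he; rw [h e, if_neg he, pow_zero]
  · intro h; exact absurd (Finset.mem_univ _) h

lemma sgn_z1_x1 : sgn L (z1 L) (x1 L) = -1 := sgn_of_point L _ _ _ (z1_mul_x1 L)
lemma sgn_z2_x2 : sgn L (z2 L) (x2 L) = -1 := sgn_of_point L _ _ _ (z2_mul_x2 L)

lemma sgn_z1_x2 : sgn L (z1 L) (x2 L) = 1 := by
  refine sgn_eq_one L _ _ fun e => ?_
  obtain ⟨⟨r, s⟩, i⟩ := e
  by_cases hi : i = 0 <;> simp [z1, x2, hi]

lemma sgn_z2_x1 : sgn L (z2 L) (x1 L) = 1 := by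
  refine sgn_eq_one L _ _ fun e => ?_
  obtain ⟨⟨r, s⟩, i⟩ := e
  by_cases hi : i = 0 <;> simp [z2, x1, hi]

lemma sgn_z1_xS (v : V L) : sgn L (z1 L) (xS L v) = 1 := by
  obtain ⟨r, s⟩ := v
  rw [xS]
  simp only [sgn_add_right, sgn_delta_right, Prod.mk_sub_mk, sub_zero]
  by_cases hs : s = 1 <;> simp [z1, hs]

lemma sgn_z2_xS (v : V L) : sgn L (z2 L) (xS L v) = 1 := by
  obtain ⟨r, s⟩ := v
  rw [xS]
  simp only [sgn_add_right, sgn_delta_right, Prod.mk_sub_mk, sub_zero]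
  by_cases hr : r = 1 <;> simp [z2, hr]

lemma sgn_zS_x1 (v : V L) : sgn L (zS L v) (x1 L) = 1 := by
  obtain ⟨r, s⟩ := v
  rw [zS]
  simp only [sgn_add_left, sgn_delta_left, Prod.mk_add_mk, add_zero]
  by_cases hr : r = 0 <;> simp [x1, hr]

lemma sgn_zS_x2 (v : V L) : sgn L (zS L v) (x2 L) = 1 := by
  obtain ⟨r, s⟩ := v
  rw [zS]
  simp only [sgn_add_left, sgn_delta_left, Prod.mk_add_mk, add_zero]
  by_cases hs : s = 0 <;> simp [x2, hs]

/-! ### commutation -/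

lemma W_comm (x z x' z' : E L → Fin 2) (h : sgn L z' x = sgn L z x') :
    W L x z * W L x' z' = W L x' z' * W L x z := by
  rw [W_mul, W_mul, h, add_comm x', add_comm z']

lemma W_comm_stab (X Z : E L → Fin 2)
    (hv : ∀ v, sgn L Z (xS L v) = 1) (hp : ∀ v, sgn L (zS L v) X = 1) :
    ∀ j, W L X Z * stab L j = stab L j * W L X Z := by
  intro j
  rcases j with v | v
  · rw [stab, Sv_eq]
    exact W_comm L _ _ _ _ (by rw [sgn_zero_left, hv v])
  · rw [stab, Sp_eq]
    exact W_comm L _ _ _ _ (by rw [sgn_zero_right, hp v])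

lemma W_comm_corr (X Z : E L → Fin 2)
    (hA : ∀ r s : ZMod L, s ≠ 1 → X ((r, s - 1), 1) = 0)
    (hB : ∀ r : ZMod L, r ≠ 1 → X ((r - 1, 1), 0) = 0)
    (hC : ∀ r s : ZMod L, s ≠ 0 → Z ((r, s + 1), 0) = 0)
    (hD : ∀ r : ZMod L, r ≠ 0 → Z ((r + 1, 0), 1) = 0) :
    ∀ j, W L X Z * corr L j = corr L j * W L X Z := by
  intro j
  rcases j with ⟨r, s⟩ | ⟨r, s⟩ <;> rw [corr]
  · split_ifs with h1 h2
    · rw [mul_one, one_mul]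
    · rw [Zop_eq]
      refine W_comm L _ _ _ _ ?_
      rw [sgn_zero_right, sgn_delta_left, hA r s h2, Fin.val_zero, pow_zero]
    · have hs : s = 1 := not_not.mp h2
      have hr : r ≠ 1 := fun hh => h1 (by rw [hh, hs])
      rw [Zop_eq]
      refine W_comm L _ _ _ _ ?_
      rw [sgn_zero_right, sgn_delta_left, hB r hr, Fin.val_zero, pow_zero]
  · split_ifs with h1 h2
    · rw [mul_one, one_mul]
    · rw [Xop_eq]
      refine W_comm L _ _ _ _ ?_
      rw [sgn_zero_left, sgn_delta_right, hC r s h2, Fin.val_zero, pow_zero]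
    · have hs : s = 0 := not_not.mp h2
      have hr : r ≠ 0 := fun hh => h1 (by rw [hh, hs])
      rw [Xop_eq]
      refine W_comm L _ _ _ _ ?_
      rw [sgn_zero_left, sgn_delta_right, hD r hr, Fin.val_zero, pow_zero]

lemma comm_X1bar_stab : ∀ j, X1bar L * stab L j = stab L j * X1bar L := by
  rw [X1bar_eq]
  exact W_comm_stab L _ _ (fun v => sgn_zero_left L _) (fun v => sgn_zS_x1 L v)

lemma comm_Z1bar_stab : ∀ j, Z1bar L * stab L j = stab L j * Z1bar L := by
  rw [Z1bar_eq]
  exact W_comm_stab L _ _ (fun v => sgn_z1_xS L v) (fun v => sgn_zero_right L _)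

lemma comm_X2bar_stab : ∀ j, X2bar L * stab L j = stab L j * X2bar L := by
  rw [X2bar_eq]
  exact W_comm_stab L _ _ (fun v => sgn_zero_left L _) (fun v => sgn_zS_x2 L v)

lemma comm_Z2bar_stab : ∀ j, Z2bar L * stab L j = stab L j * Z2bar L := by
  rw [Z2bar_eq]
  exact W_comm_stab L _ _ (fun v => sgn_z2_xS L v) (fun v => sgn_zero_right L _)

lemma comm_X1bar_corr : ∀ j, X1bar L * corr L j = corr L j * X1bar L := by
  rw [X1bar_eq]
  refine W_comm_corr L _ _ ?_ ?_ ?_ ?_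
  · intro r s _; simp [x1]
  · intro r hr
    simp only [x1]
    rw [if_neg (fun h => hr (by have := h.1; rwa [sub_eq_zero] at this))]
  · intro r s _; simp [z1]
  · intro r _; simp [z1]

lemma comm_X2bar_corr : ∀ j, X2bar L * corr L j = corr L j * X2bar L := by
  rw [X2bar_eq]
  refine W_comm_corr L _ _ ?_ ?_ ?_ ?_
  · intro r s hs
    simp only [x2]
    rw [if_neg (fun h => hs (by have := h.1; rwa [sub_eq_zero] at this))]
  · intro r _; simp [x2]
  · intro r s _; rfl
  · intro r _; rfl

lemma comm_Z1bar_corr : ∀ j, Z1bar L * corr L j = corr L j * Z1bar L := by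
  rw [Z1bar_eq]
  refine W_comm_corr L _ _ ?_ ?_ ?_ ?_
  · intro r s _; rfl
  · intro r _; rfl
  · intro r s hs
    simp only [z1]
    rw [if_neg (fun h => hs (by have := h.1; rwa [add_eq_right] at this))]
  · intro r _; simp [z1]

lemma comm_Z2bar_corr : ∀ j, Z2bar L * corr L j = corr L j * Z2bar L := by
  rw [Z2bar_eq]
  refine W_comm_corr L _ _ ?_ ?_ ?_ ?_
  · intro r s _; rfl
  · intro r _; rfl
  · intro r s _; simp [z2]
  · intro r hr
    simp only [z2]
    rw [if_neg (fun h => hr (by have := h.1; rwa [add_eq_right] at this))]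

/-! ### stabilizer and correction basic facts -/

lemma stab_sq (j : Gen L) : stab L j * stab L j = 1 := by
  rcases j with v | v
  · rw [stab, Sv_eq, W_sq, sgn_zero_left, one_smul]
  · rw [stab, Sp_eq, W_sq, sgn_zero_right, one_smul]

lemma corr_sq (j : Gen L) : corr L j * corr L j = 1 := by
  rcases j with ⟨r, s⟩ | ⟨r, s⟩ <;> rw [corr] <;> split_ifs <;>
    simp only [mul_one, Zop_eq, Xop_eq, W_sq, sgn_zero_left, sgn_zero_right, one_smul]

lemma corr_herm (j : Gen L) : (corr L j)ᴴ = corr L j := by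
  rcases j with ⟨r, s⟩ | ⟨r, s⟩ <;> rw [corr] <;> split_ifs <;>
    simp only [Matrix.conjTranspose_one, Zop_eq, Xop_eq, W_herm, sgn_zero_left,
      sgn_zero_right, one_smul]

/-! ### projector algebra -/

lemma Pplus_sq (j : Gen L) : Pplus L j * Pplus L j = Pplus L j := by
  rw [Pplus, smul_mul_smul_comm]
  simp only [mul_add, add_mul, one_mul, mul_one, stab_sq]
  rw [show (1 : Op L) + stab L j + (stab L j + 1) = (2 : ℂ) • (1 + stab L j) by
      rw [two_smul]; abel,
    smul_smul]
  norm_num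

lemma Pminus_sq (j : Gen L) : Pminus L j * Pminus L j = Pminus L j := by
  rw [Pminus, smul_mul_smul_comm]
  simp only [mul_sub, sub_mul, one_mul, mul_one, stab_sq]
  rw [show (1 : Op L) - stab L j - (stab L j - 1) = (2 : ℂ) • (1 - stab L j) by
      rw [two_smul]; abel,
    smul_smul]
  norm_num

lemma Pplus_add_Pminus (j : Gen L) : Pplus L j + Pminus L j = 1 := by
  rw [Pplus, Pminus, ← smul_add,
    show (1 : Op L) + stab L j + (1 - stab L j) = (2 : ℂ) • 1 by rw [two_smul]; abel,
    smul_smul]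
  norm_num

lemma comm_Pplus {M : Op L} (j : Gen L) (h : M * stab L j = stab L j * M) :
    M * Pplus L j = Pplus L j * M := by
  rw [Pplus, Matrix.mul_smul, Matrix.smul_mul, mul_add, add_mul, mul_one, one_mul, h]

lemma comm_Pminus {M : Op L} (j : Gen L) (h : M * stab L j = stab L j * M) :
    M * Pminus L j = Pminus L j * M := by
  rw [Pminus, Matrix.mul_smul, Matrix.smul_mul, mul_sub, sub_mul, mul_one, one_mul, h]

lemma trace_sandwich (A B ρ : Op L) : (A * (ρ * B)).trace = ((B * A) * ρ).trace := by
  rw [← mul_assoc, Matrix.trace_mul_comm, ← mul_assoc]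

/-! ### invariance of the logical trace under the channel -/

lemma trace_Tj (M : Op L)
    (hS : ∀ j, M * stab L j = stab L j * M)
    (hC : ∀ j, M * corr L j = corr L j * M)
    (j : Gen L) (ρ : Op L) :
    (M * Tj L j ρ).trace = (M * ρ).trace := by
  have hTj : Tj L j ρ = Pplus L j * (ρ * Pplus L j)
      + (corr L j * Pminus L j) * (ρ * (Pminus L j * (corr L j)ᴴ)) := by
    simp [Tj, LinearMap.mulLeft_apply, LinearMap.mulRight_apply, mul_assoc]
  rw [hTj, mul_add, Matrix.trace_add]
  have k1 : Pplus L j * (M * Pplus L j) = M * Pplus L j := by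
    rw [← mul_assoc, ← comm_Pplus L j (hS j), mul_assoc, Pplus_sq]
  have k2 : (Pminus L j * (corr L j)ᴴ) * (M * (corr L j * Pminus L j)) = M * Pminus L j := by
    rw [corr_herm, mul_assoc (Pminus L j) (corr L j), ← mul_assoc (corr L j) M, ← hC j,
      mul_assoc M (corr L j), ← mul_assoc (corr L j) (corr L j), corr_sq, one_mul,
      ← mul_assoc, ← comm_Pminus L j (hS j), mul_assoc, Pminus_sq]
  have h1 : (M * (Pplus L j * (ρ * Pplus L j))).trace = ((M * Pplus L j) * ρ).trace := by
    rw [← mul_assoc, trace_sandwich, k1]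
  have h2 : (M * ((corr L j * Pminus L j) * (ρ * (Pminus L j * (corr L j)ᴴ)))).trace
      = ((M * Pminus L j) * ρ).trace := by
    rw [← mul_assoc, trace_sandwich, k2]
  rw [h1, h2, ← Matrix.trace_add, ← add_mul, ← mul_add, Pplus_add_Pminus, mul_one]

lemma trace_Liou (M : Op L)
    (hS : ∀ j, M * stab L j = stab L j * M)
    (hC : ∀ j, M * corr L j = corr L j * M)
    (ρ : Op L) : (M * Liou L ρ).trace = 0 := by
  have : Liou L ρ = ∑ j : Gen L, (Tj L j ρ - ρ) := by
    rw [Liou, LinearMap.sum_apply]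
    exact Finset.sum_congr rfl fun j _ => rfl
  rw [this, Finset.mul_sum, Matrix.trace_sum]
  refine Finset.sum_eq_zero fun j _ => ?_
  rw [mul_sub, Matrix.trace_sub, trace_Tj L M hS hC j ρ, sub_self]

lemma trace_expL (M : Op L)
    (hS : ∀ j, M * stab L j = stab L j * M)
    (hC : ∀ j, M * corr L j = corr L j * M)
    (t : ℝ) (ρ : Op L) : (M * expL L t ρ).trace = (M * ρ).trace := by
  classical
  haveI : CompleteSpace (Op L) := FiniteDimensional.complete ℂ _
  letI : NormedRing (Op L →L[ℂ] Op L) := ContinuousLinearMap.toNormedRing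
  letI : NormedAlgebra ℂ (Op L →L[ℂ] Op L) := ContinuousLinearMap.toNormedAlgebra
  haveI : SequentialSpace (Op L) :=
    inferInstanceAs (SequentialSpace ((E L → Fin 2) → (E L → Fin 2) → ℂ))
  haveI : @CompleteSpace (Op L →L[ℂ] Op L) PseudoMetricSpace.toUniformSpace :=
    ContinuousLinearMap.instCompleteSpace
  haveI : IsTopologicalRing (Op L →L[ℂ] Op L) := NonUnitalSeminormedRing.toIsTopologicalRing
  set A : Op L →L[ℂ] Op L := (t : ℂ) • (Liou L).toContinuousLinearMap with hA
  let φlin : Op L →ₗ[ℂ] ℂ := (Matrix.traceLinearMap _ ℂ ℂ).comp (LinearMap.mulLeft ℂ M)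
  let φ : Op L →L[ℂ] ℂ := ⟨φlin, LinearMap.continuous_of_finiteDimensional φlin⟩
  have hφ : ∀ σ : Op L, φ σ = (M * σ).trace := fun σ => rfl
  have hφA : ∀ σ : Op L, φ (A σ) = 0 := by
    intro σ
    rw [hφ]
    have : A σ = (t : ℂ) • (Liou L σ) := rfl
    rw [this, mul_smul_comm, Matrix.trace_smul, trace_Liou L M hS hC σ, smul_zero]
  have hφAn : ∀ n : ℕ, φ ((A ^ (n + 1)) ρ) = 0 := by
    intro n
    rw [pow_succ']
    exact hφA _
  have hsum : Summable fun n : ℕ => ((Nat.factorial n : ℂ)⁻¹) • A ^ n :=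
    NormedSpace.expSeries_summable' (𝕂 := ℂ) A
  have hexp : expL L t = ∑' n : ℕ, ((Nat.factorial n : ℂ)⁻¹) • A ^ n := by
    rw [expL, ← hA]
    exact congrFun (NormedSpace.exp_eq_tsum ℂ) A
  have happ : expL L t ρ = ∑' n : ℕ, ((Nat.factorial n : ℂ)⁻¹) • ((A ^ n) ρ) := by
    rw [hexp]
    have := (ContinuousLinearMap.apply ℂ (Op L) ρ).map_tsum hsum
    exact this
  have hsum2 : Summable fun n : ℕ => ((Nat.factorial n : ℂ)⁻¹) • ((A ^ n) ρ) :=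
    (hsum.map (ContinuousLinearMap.apply ℂ (Op L) ρ)
      (ContinuousLinearMap.apply ℂ (Op L) ρ).continuous).congr (fun n => rfl)
  have : φ (expL L t ρ) = ∑' n : ℕ, φ (((Nat.factorial n : ℂ)⁻¹) • ((A ^ n) ρ)) := by
    rw [happ]
    exact φ.map_tsum hsum2
  rw [← hφ, this]
  rw [tsum_eq_single 0]
  · simp [hφ]
  · intro n hn
    obtain ⟨m, rfl⟩ := Nat.exists_eq_succ_of_ne_zero hn
    rw [map_smul, hφAn m, smul_zero]

/-! ### commutation for logical operators -/

lemma comm_mul {M N S : Op L} (hM : M * S = S * M) (hN : N * S = S * N) :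
    (M * N) * S = S * (M * N) := by
  rw [mul_assoc, hN, ← mul_assoc, hM, mul_assoc]

lemma comm_smul (c : ℂ) {M S : Op L} (hM : M * S = S * M) :
    (c • M) * S = S * (c • M) := by
  rw [Matrix.smul_mul, Matrix.mul_smul, hM]

lemma comm_logicalP_stab (a b : Fin 4) (j : Gen L) :
    logicalP L a b * stab L j = stab L j * logicalP L a b := by
  rw [logicalP]
  refine comm_mul L ?_ ?_
  · fin_cases a
    · exact (one_mul _).trans (mul_one _).symm
    · exact comm_X1bar_stab L j
    · exact comm_smul L _ (comm_mul L (comm_X1bar_stab L j) (comm_Z1bar_stab L j))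
    · exact comm_Z1bar_stab L j
  · fin_cases b
    · exact (one_mul _).trans (mul_one _).symm
    · exact comm_X2bar_stab L j
    · exact comm_smul L _ (comm_mul L (comm_X2bar_stab L j) (comm_Z2bar_stab L j))
    · exact comm_Z2bar_stab L j

lemma comm_logicalP_corr (a b : Fin 4) (j : Gen L) :
    logicalP L a b * corr L j = corr L j * logicalP L a b := by
  rw [logicalP]
  refine comm_mul L ?_ ?_
  · fin_cases a
    · exact (one_mul _).trans (mul_one _).symm
    · exact comm_X1bar_corr L j
    · exact comm_smul L _ (comm_mul L (comm_X1bar_corr L j) (comm_Z1bar_corr L j))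
    · exact comm_Z1bar_corr L j
  · fin_cases b
    · exact (one_mul _).trans (mul_one _).symm
    · exact comm_X2bar_corr L j
    · exact comm_smul L _ (comm_mul L (comm_X2bar_corr L j) (comm_Z2bar_corr L j))
    · exact comm_Z2bar_corr L j

/-! ### membership lemmas for the qubit regions -/

lemma mem_Bfin (r s : ZMod L) (i : Fin 2) :
    ((r, s), i) ∈ Bfin L ↔ r = 0 ∧ i = 0 ∧ s ≠ 1 := by
  simp only [Bfin, Finset.mem_image, Finset.mem_filter, Finset.mem_univ, true_and,
    Prod.mk.injEq]
  constructor
  · rintro ⟨a, ha, ⟨h1, h2⟩, h3⟩; exact ⟨h1.symm, h3.symm, h2 ▸ ha⟩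
  · rintro ⟨h1, h2, h3⟩; exact ⟨s, h3, ⟨h1.symm, rfl⟩, h2.symm⟩

lemma mem_B'fin (r s : ZMod L) (i : Fin 2) :
    ((r, s), i) ∈ B'fin L ↔ s = 0 ∧ i = 1 ∧ r ≠ 1 := by
  simp only [B'fin, Finset.mem_image, Finset.mem_filter, Finset.mem_univ, true_and,
    Prod.mk.injEq]
  constructor
  · rintro ⟨a, ha, ⟨h1, h2⟩, h3⟩; exact ⟨h2.symm, h3.symm, h1 ▸ ha⟩
  · rintro ⟨h1, h2, h3⟩; exact ⟨r, h3, ⟨rfl, h1.symm⟩, h2.symm⟩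

lemma mem_Cfin (r s : ZMod L) (i : Fin 2) :
    ((r, s), i) ∈ Cfin L ↔ s = 1 ∧ i = 0 ∧ r ≠ 0 := by
  simp only [Cfin, Finset.mem_image, Finset.mem_filter, Finset.mem_univ, true_and,
    Prod.mk.injEq]
  constructor
  · rintro ⟨a, ha, ⟨h1, h2⟩, h3⟩; exact ⟨h2.symm, h3.symm, h1 ▸ ha⟩
  · rintro ⟨h1, h2, h3⟩; exact ⟨r, h3, ⟨rfl, h1.symm⟩, h2.symm⟩

lemma mem_C'fin (r s : ZMod L) (i : Fin 2) :
    ((r, s), i) ∈ C'fin L ↔ r = 1 ∧ i = 1 ∧ s ≠ 0 := by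
  simp only [C'fin, Finset.mem_image, Finset.mem_filter, Finset.mem_univ, true_and,
    Prod.mk.injEq]
  constructor
  · rintro ⟨a, ha, ⟨h1, h2⟩, h3⟩; exact ⟨h1.symm, h3.symm, h2 ▸ ha⟩
  · rintro ⟨h1, h2, h3⟩; exact ⟨s, h3, ⟨h1.symm, rfl⟩, h2.symm⟩

lemma A1_not_mem_BBCC : A1 L ∉ (Bfin L ∪ B'fin L) ∪ (Cfin L ∪ C'fin L) := by
  intro h
  simp only [Finset.mem_union, A1, mem_Bfin, mem_B'fin, mem_Cfin, mem_C'fin] at h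
  rcases h with (⟨_, _, hs⟩ | ⟨_, hi, _⟩) | (⟨_, _, hr⟩ | ⟨_, hi, _⟩)
  · exact hs rfl
  · exact absurd hi (by decide)
  · exact hr rfl
  · exact absurd hi (by decide)

lemma A2_not_mem_BBCC : A2 L ∉ (Bfin L ∪ B'fin L) ∪ (Cfin L ∪ C'fin L) := by
  intro h
  simp only [Finset.mem_union, A2, mem_Bfin, mem_B'fin, mem_Cfin, mem_C'fin] at h
  rcases h with (⟨_, hi, _⟩ | ⟨_, _, hr⟩) | (⟨_, hi, _⟩ | ⟨_, _, hs⟩)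
  · exact absurd hi (by decide)
  · exact hr rfl
  · exact absurd hi (by decide)
  · exact hs rfl

lemma A1_ne_A2 : A1 L ≠ A2 L := by
  intro h
  exact (by decide : (0 : Fin 2) ≠ 1) (congrArg Prod.snd h)

lemma BB_disj_CC : Disjoint (Bfin L ∪ B'fin L) (Cfin L ∪ C'fin L) := by
  rw [Finset.disjoint_left]
  rintro ⟨⟨r, s⟩, i⟩ h h'
  simp only [Finset.mem_union, mem_Bfin, mem_B'fin, mem_Cfin, mem_C'fin] at h h'
  rcases h with ⟨_, hi, hs⟩ | ⟨_, hi, hr⟩ <;> rcases h' with ⟨hs', hi', hr'⟩ | ⟨hr', hi', hs'⟩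
  · exact hs hs'
  · rw [hi] at hi'; exact absurd hi' (by decide)
  · rw [hi] at hi'; exact absurd hi' (by decide)
  · exact hr hr'

lemma Dfin_not {e : E L} (h : e ∈ Dfin L) :
    e ≠ A1 L ∧ e ≠ A2 L ∧ e ∉ (Bfin L ∪ B'fin L) ∧ e ∉ (Cfin L ∪ C'fin L) := by
  simp only [Dfin, Finset.mem_sdiff, Finset.mem_univ, true_and, Finset.mem_union,
    Finset.mem_insert, Finset.mem_singleton] at h
  push_neg at h
  simp only [Finset.mem_union]
  tauto

lemma mem_Dfin {e : E L} (h1 : e ≠ A1 L) (h2 : e ≠ A2 L)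
    (h3 : e ∉ Bfin L ∪ B'fin L) (h4 : e ∉ Cfin L ∪ C'fin L) : e ∈ Dfin L := by
  simp only [Finset.mem_union] at h3 h4
  simp only [Dfin, Finset.mem_sdiff, Finset.mem_univ, true_and, Finset.mem_union,
    Finset.mem_insert, Finset.mem_singleton]
  push_neg
  tauto

/-- The splitting of a configuration into its values on `A1`, `A2`, `B ∪ B'`, `C ∪ C'`, `D`. -/
noncomputable def split : (E L → Fin 2) ≃
    (Fin 2 × Fin 2 × ({e // e ∈ Bfin L ∪ B'fin L} → Fin 2) ×
      ({e // e ∈ Cfin L ∪ C'fin L} → Fin 2) × ({e // e ∈ Dfin L} → Fin 2)) where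
  toFun σ := (σ (A1 L), σ (A2 L), fun i => σ i.1, fun i => σ i.1, fun i => σ i.1)
  invFun q := fun e =>
    if h1 : e = A1 L then q.1
    else if h2 : e = A2 L then q.2.1
    else if h3 : e ∈ Bfin L ∪ B'fin L then q.2.2.1 ⟨e, h3⟩
    else if h4 : e ∈ Cfin L ∪ C'fin L then q.2.2.2.1 ⟨e, h4⟩
    else q.2.2.2.2 ⟨e, mem_Dfin L h1 h2 h3 h4⟩
  left_inv σ := by
    funext e
    dsimp only
    by_cases h1 : e = A1 L
    · rw [dif_pos h1, h1]
    rw [dif_neg h1]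
    by_cases h2 : e = A2 L
    · rw [dif_pos h2, h2]
    rw [dif_neg h2]
    by_cases h3 : e ∈ Bfin L ∪ B'fin L
    · rw [dif_pos h3]
    rw [dif_neg h3]
    by_cases h4 : e ∈ Cfin L ∪ C'fin L
    · rw [dif_pos h4]
    rw [dif_neg h4]
  right_inv q := by
    obtain ⟨u, v, fB, fC, g⟩ := q
    refine Prod.ext ?_ (Prod.ext ?_ (Prod.ext ?_ (Prod.ext ?_ ?_))) <;>
      simp only
    · simp
    · rw [dif_neg (Ne.symm (A1_ne_A2 L))]; simp
    · funext i
      obtain ⟨e, he⟩ := i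
      have h1 : e ≠ A1 L := fun h => A1_not_mem_BBCC L (Finset.mem_union_left _ (h ▸ he))
      have h2 : e ≠ A2 L := fun h => A2_not_mem_BBCC L (Finset.mem_union_left _ (h ▸ he))
      simp only
      rw [dif_neg h1, dif_neg h2, dif_pos he]
    · funext i
      obtain ⟨e, he⟩ := i
      have h1 : e ≠ A1 L := fun h => A1_not_mem_BBCC L (Finset.mem_union_right _ (h ▸ he))
      have h2 : e ≠ A2 L := fun h => A2_not_mem_BBCC L (Finset.mem_union_right _ (h ▸ he))
      have h3 : e ∉ Bfin L ∪ B'fin L := Finset.disjoint_right.mp (BB_disj_CC L) he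
      simp only
      rw [dif_neg h1, dif_neg h2, dif_neg h3, dif_pos he]
    · funext i
      obtain ⟨e, he⟩ := i
      obtain ⟨h1, h2, h3, h4⟩ := Dfin_not L he
      simp only
      rw [dif_neg h1, dif_neg h2, dif_neg h3, dif_neg h4]

lemma prod_ind_eq (fC : {e // e ∈ Cfin L ∪ C'fin L} → Fin 2) :
    (∏ i : {e // e ∈ Cfin L ∪ C'fin L}, if fC i = 0 then (1:ℂ) else 0)
      = if fC = 0 then 1 else 0 := by
  by_cases h : fC = 0
  · subst h; simp
  · rw [if_neg h]
    obtain ⟨i, hi⟩ : ∃ i, fC i ≠ 0 := by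
      by_contra hh; push_neg at hh; exact h (funext hh)
    exact Finset.prod_eq_zero (Finset.mem_univ i) (by rw [if_neg hi])

omit [NeZero L] in
lemma sum_factor {α β γ : Type*} [Fintype α] [Fintype β] [Fintype γ]
    (f : α → ℂ) (g : β → ℂ) (h : γ → ℂ) (c : ℂ) :
    (∑ a : α, ∑ b : β, ∑ e : γ, c * f a * g b * h e)
      = c * (∑ a : α, f a) * (∑ b : β, g b) * (∑ e : γ, h e) := by
  have e3 : ∀ a b, (∑ e : γ, c * f a * g b * h e) = c * f a * g b * (∑ e : γ, h e) :=
    fun a b => by rw [← Finset.mul_sum]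
  simp_rw [e3]
  have e2 : ∀ a, (∑ b : β, c * f a * g b * (∑ e : γ, h e))
      = c * f a * (∑ b : β, g b) * (∑ e : γ, h e) := by
    intro a
    calc (∑ b : β, c * f a * g b * (∑ e : γ, h e))
        = ∑ b : β, (c * f a * (∑ e : γ, h e)) * g b :=
          Finset.sum_congr rfl fun b _ => by ring
      _ = (c * f a * (∑ e : γ, h e)) * ∑ b : β, g b := by rw [← Finset.mul_sum]
      _ = c * f a * (∑ b : β, g b) * (∑ e : γ, h e) := by ring
  simp_rw [e2]
  calc (∑ a : α, c * f a * (∑ b : β, g b) * (∑ e : γ, h e))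
      = ∑ a : α, (c * (∑ b : β, g b) * (∑ e : γ, h e)) * f a :=
        Finset.sum_congr rfl fun a _ => by ring
    _ = (c * (∑ b : β, g b) * (∑ e : γ, h e)) * ∑ a : α, f a := by rw [← Finset.mul_sum]
    _ = _ := by ring

lemma trace_W_rho0 (Ψ : Fin 2 → Fin 2 → ℂ)
    (ρD : Matrix ({e // e ∈ Dfin L} → Fin 2) ({e // e ∈ Dfin L} → Fin 2) ℂ)
    (hρDtr : ρD.trace = 1) (x z : E L → Fin 2)
    (hxC : ∀ e ∈ Cfin L ∪ C'fin L, x e = 0) (hxD : ∀ e ∈ Dfin L, x e = 0)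
    (hzB : ∀ e ∈ Bfin L ∪ B'fin L, z e = 0) (hzD : ∀ e ∈ Dfin L, z e = 0) :
    (W L x z * rho0 L Ψ ρD).trace
      = ∑ u : Fin 2, ∑ v : Fin 2,
          ((-1:ℂ) ^ ((z (A1 L)).val * u.val) * (-1:ℂ) ^ ((z (A2 L)).val * v.val))
            * (Ψ (u + x (A1 L)) (v + x (A2 L)) * (starRingEnd ℂ) (Ψ u v)) := by
  classical
  -- universe decomposition
  have hU : (Finset.univ : Finset (E L)) =
      (({A1 L, A2 L} ∪ (Bfin L ∪ B'fin L)) ∪ (Cfin L ∪ C'fin L)) ∪ Dfin L := by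
    ext e
    simp only [Finset.mem_univ, true_iff, Finset.mem_union, Finset.mem_insert,
      Finset.mem_singleton, Dfin, Finset.mem_sdiff, true_and]
    tauto
  have d1 : Disjoint (({A1 L, A2 L} ∪ (Bfin L ∪ B'fin L)) ∪ (Cfin L ∪ C'fin L)) (Dfin L) := by
    rw [Finset.disjoint_right]
    intro e he
    obtain ⟨h1, h2, h3, h4⟩ := Dfin_not L he
    simp only [Finset.mem_union, Finset.mem_insert, Finset.mem_singleton] at h3 h4 ⊢
    tauto
  have d2 : Disjoint ({A1 L, A2 L} ∪ (Bfin L ∪ B'fin L)) (Cfin L ∪ C'fin L) := by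
    rw [Finset.disjoint_left]
    intro e he hC
    rcases Finset.mem_union.mp he with h | h
    · rcases Finset.mem_insert.mp h with rfl | h
      · exact A1_not_mem_BBCC L (Finset.mem_union_right _ hC)
      · have h' := Finset.mem_singleton.mp h
        subst h'
        exact A2_not_mem_BBCC L (Finset.mem_union_right _ hC)
    · exact Finset.disjoint_left.mp (BB_disj_CC L) h hC
  have d3 : Disjoint ({A1 L, A2 L} : Finset (E L)) (Bfin L ∪ B'fin L) := by
    rw [Finset.disjoint_left]
    intro e he hB
    rcases Finset.mem_insert.mp he with rfl | h
    · exact A1_not_mem_BBCC L (Finset.mem_union_left _ hB)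
    · have h' := Finset.mem_singleton.mp h
      subst h'
      exact A2_not_mem_BBCC L (Finset.mem_union_left _ hB)
  -- key sign computation
  have key : ∀ σ : E L → Fin 2,
      sgn L z σ * (∏ e ∈ Cfin L ∪ C'fin L, if (σ + x) e = 0 ∧ σ e = 0 then (1:ℂ) else 0)
        = ((-1:ℂ) ^ ((z (A1 L)).val * (σ (A1 L)).val)
            * (-1:ℂ) ^ ((z (A2 L)).val * (σ (A2 L)).val))
          * ∏ i : {e // e ∈ Cfin L ∪ C'fin L}, (if σ i.1 = 0 then (1:ℂ) else 0) := by
    intro σ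
    have hind : (∏ e ∈ Cfin L ∪ C'fin L, if (σ + x) e = 0 ∧ σ e = 0 then (1:ℂ) else 0)
        = ∏ e ∈ Cfin L ∪ C'fin L, (if σ e = 0 then (1:ℂ) else 0) := by
      refine Finset.prod_congr rfl fun e he => ?_
      simp only [Pi.add_apply, hxC e he, add_zero, and_self]
    have hsgn : sgn L z σ
        = ((-1:ℂ) ^ ((z (A1 L)).val * (σ (A1 L)).val)
            * (-1:ℂ) ^ ((z (A2 L)).val * (σ (A2 L)).val))
          * ∏ e ∈ Cfin L ∪ C'fin L, (-1:ℂ) ^ ((z e).val * (σ e).val) := by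
      rw [sgn, hU, Finset.prod_union d1, Finset.prod_union d2, Finset.prod_union d3,
        Finset.prod_pair (A1_ne_A2 L),
        Finset.prod_eq_one (s := Bfin L ∪ B'fin L) (fun e he => by
          rw [hzB e he, Fin.val_zero, Nat.zero_mul, pow_zero]),
        Finset.prod_eq_one (s := Dfin L) (fun e he => by
          rw [hzD e he, Fin.val_zero, Nat.zero_mul, pow_zero]),
        mul_one, mul_one]
    rw [hind, hsgn, mul_assoc, ← Finset.prod_mul_distrib]
    congr 1
    rw [Finset.prod_coe_sort (Cfin L ∪ C'fin L) (fun e => if σ e = 0 then (1:ℂ) else 0)]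
    refine Finset.prod_congr rfl fun e _ => ?_
    by_cases h : σ e = 0
    · rw [if_pos h, h, Fin.val_zero, Nat.mul_zero, pow_zero, mul_one]
    · rw [if_neg h, mul_zero]
  -- step 1 : trace as a sum over configurations
  have step1 : (W L x z * rho0 L Ψ ρD).trace
      = ∑ σ : E L → Fin 2, sgn L z σ * rho0 L Ψ ρD (σ + x) σ := by
    rw [Matrix.trace]
    refine Finset.sum_congr rfl fun σ _ => ?_
    rw [Matrix.diag_apply, Matrix.mul_apply, Finset.sum_eq_single (σ + x)]
    · simp [W]
    · intro τ _ hτ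
      simp only [W]
      rw [if_neg hτ, zero_mul]
    · intro h; exact absurd (Finset.mem_univ _) h
  -- step 2 : change of variables
  have step2 : (∑ σ : E L → Fin 2, sgn L z σ * rho0 L Ψ ρD (σ + x) σ)
      = ∑ q : Fin 2 × Fin 2 × ({e // e ∈ Bfin L ∪ B'fin L} → Fin 2) ×
          ({e // e ∈ Cfin L ∪ C'fin L} → Fin 2) × ({e // e ∈ Dfin L} → Fin 2),
          (((-1:ℂ) ^ ((z (A1 L)).val * q.1.val) * (-1:ℂ) ^ ((z (A2 L)).val * q.2.1.val))
            * (Ψ (q.1 + x (A1 L)) (q.2.1 + x (A2 L)) * (starRingEnd ℂ) (Ψ q.1 q.2.1)))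
          * (∏ _i : {e // e ∈ Bfin L ∪ B'fin L}, (2⁻¹:ℂ))
          * (∏ i : {e // e ∈ Cfin L ∪ C'fin L}, if q.2.2.2.1 i = 0 then (1:ℂ) else 0)
          * ρD q.2.2.2.2 q.2.2.2.2 := by
    refine Fintype.sum_equiv (split L) _ _ fun σ => ?_
    simp only [split, Equiv.coe_fn_mk]
    have hDarg : (fun d : {e // e ∈ Dfin L} => (σ + x) d.1) = (fun d => σ d.1) :=
      funext fun d => by rw [Pi.add_apply, hxD d.1 d.2, add_zero]
    have e1 : rho0 L Ψ ρD (σ + x) σ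
        = Ψ (σ (A1 L) + x (A1 L)) (σ (A2 L) + x (A2 L))
            * (starRingEnd ℂ) (Ψ (σ (A1 L)) (σ (A2 L)))
          * (∏ _e ∈ Bfin L ∪ B'fin L, (2⁻¹:ℂ))
          * (∏ e ∈ Cfin L ∪ C'fin L, if (σ + x) e = 0 ∧ σ e = 0 then (1:ℂ) else 0)
          * ρD (fun d => σ d.1) (fun d => σ d.1) := by
      simp only [rho0, Pi.add_apply]
      rw [show (fun d : {e // e ∈ Dfin L} => σ d.1 + x d.1) = (fun d => σ d.1) from
        funext fun d => by rw [hxD d.1 d.2, add_zero]]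
    rw [e1]
    have hsplit : ∀ i : {e // e ∈ Bfin L ∪ B'fin L}, True := fun _ => trivial
    -- identify the coe-sort product over B ∪ B'
    rw [show (∏ _e ∈ Bfin L ∪ B'fin L, (2⁻¹:ℂ))
        = ∏ _i : {e // e ∈ Bfin L ∪ B'fin L}, (2⁻¹:ℂ) from
      (Finset.prod_coe_sort (Bfin L ∪ B'fin L) (fun _ => (2⁻¹:ℂ))).symm]
    calc sgn L z σ
          * (Ψ (σ (A1 L) + x (A1 L)) (σ (A2 L) + x (A2 L))
              * (starRingEnd ℂ) (Ψ (σ (A1 L)) (σ (A2 L)))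
            * (∏ _i : {e // e ∈ Bfin L ∪ B'fin L}, (2⁻¹:ℂ))
            * (∏ e ∈ Cfin L ∪ C'fin L, if (σ + x) e = 0 ∧ σ e = 0 then (1:ℂ) else 0)
            * ρD (fun d => σ d.1) (fun d => σ d.1))
        = (sgn L z σ
            * (∏ e ∈ Cfin L ∪ C'fin L, if (σ + x) e = 0 ∧ σ e = 0 then (1:ℂ) else 0))
          * (Ψ (σ (A1 L) + x (A1 L)) (σ (A2 L) + x (A2 L))
              * (starRingEnd ℂ) (Ψ (σ (A1 L)) (σ (A2 L)))
            * (∏ _i : {e // e ∈ Bfin L ∪ B'fin L}, (2⁻¹:ℂ))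
            * ρD (fun d => σ d.1) (fun d => σ d.1)) := by ring
      _ = _ := by
          rw [key σ]
          ac_rfl
  rw [step1, step2]
  -- step 3 : factor the sums
  simp only [Fintype.sum_prod_type]
  refine Finset.sum_congr rfl fun u _ => Finset.sum_congr rfl fun v _ => ?_
  rw [sum_factor
    (fun _ : {e // e ∈ Bfin L ∪ B'fin L} → Fin 2 =>
      ∏ _i : {e // e ∈ Bfin L ∪ B'fin L}, (2⁻¹:ℂ))
    (fun fC : {e // e ∈ Cfin L ∪ C'fin L} → Fin 2 =>
      ∏ i : {e // e ∈ Cfin L ∪ C'fin L}, if fC i = 0 then (1:ℂ) else 0)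
    (fun g : {e // e ∈ Dfin L} → Fin 2 => ρD g g)]
  have hB1 : (∑ _fB : {e // e ∈ Bfin L ∪ B'fin L} → Fin 2,
      (∏ _i : {e // e ∈ Bfin L ∪ B'fin L}, (2⁻¹:ℂ)))
      = (2:ℂ) ^ (Fintype.card {e // e ∈ Bfin L ∪ B'fin L})
        * (2⁻¹:ℂ) ^ (Fintype.card {e // e ∈ Bfin L ∪ B'fin L}) := by
    rw [Finset.sum_const, Finset.prod_const, Finset.card_univ, Finset.card_univ,
      Fintype.card_fun, nsmul_eq_mul, Fintype.card_fin]
    push_cast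
    ring
  have hC1 : (∑ fC : {e // e ∈ Cfin L ∪ C'fin L} → Fin 2,
      ∏ i : {e // e ∈ Cfin L ∪ C'fin L}, if fC i = 0 then (1:ℂ) else 0) = 1 := by
    rw [Finset.sum_congr rfl fun fC _ => prod_ind_eq L fC]
    simp
  have hD1 : (∑ g : {e // e ∈ Dfin L} → Fin 2, ρD g g) = 1 := by
    rw [← hρDtr, Matrix.trace]
    rfl
  rw [hB1, hC1, hD1, ← mul_pow]
  norm_num

/-! ### values of the logical vectors at the special qubits -/

lemma fin2_one_add_one : (1 + 1 : Fin 2) = 0 := rfl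

lemma x1_A1 : x1 L (A1 L) = 1 := if_pos ⟨rfl, rfl⟩
lemma x1_A2 : x1 L (A2 L) = 0 := if_neg (fun h => absurd h.2 (show (1:Fin 2) ≠ 0 by decide))
lemma z1_A1 : z1 L (A1 L) = 1 := if_pos ⟨rfl, rfl⟩
lemma z1_A2 : z1 L (A2 L) = 0 := if_neg (fun h => absurd h.2 (show (1:Fin 2) ≠ 0 by decide))
lemma x2_A1 : x2 L (A1 L) = 0 := if_neg (fun h => absurd h.2 (show (0:Fin 2) ≠ 1 by decide))
lemma x2_A2 : x2 L (A2 L) = 1 := if_pos ⟨rfl, rfl⟩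
lemma z2_A1 : z2 L (A1 L) = 0 := if_neg (fun h => absurd h.2 (show (0:Fin 2) ≠ 1 by decide))
lemma z2_A2 : z2 L (A2 L) = 1 := if_pos ⟨rfl, rfl⟩

/-! ### support lemmas -/

lemma x1_CC : ∀ e ∈ Cfin L ∪ C'fin L, x1 L e = 0 := by
  rintro ⟨⟨r, s⟩, i⟩ he
  rcases Finset.mem_union.mp he with h | h
  · obtain ⟨hs, hi, hr⟩ := (mem_Cfin L r s i).mp h
    simp [x1, hr]
  · obtain ⟨hr, hi, hs⟩ := (mem_C'fin L r s i).mp h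
    subst hi
    simp [x1, show (1 : Fin 2) ≠ 0 by decide]

lemma x2_CC : ∀ e ∈ Cfin L ∪ C'fin L, x2 L e = 0 := by
  rintro ⟨⟨r, s⟩, i⟩ he
  rcases Finset.mem_union.mp he with h | h
  · obtain ⟨hs, hi, hr⟩ := (mem_Cfin L r s i).mp h
    subst hi
    simp [x2, show (0 : Fin 2) ≠ 1 by decide]
  · obtain ⟨hr, hi, hs⟩ := (mem_C'fin L r s i).mp h
    simp [x2, hs]

lemma z1_BB : ∀ e ∈ Bfin L ∪ B'fin L, z1 L e = 0 := by
  rintro ⟨⟨r, s⟩, i⟩ he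
  rcases Finset.mem_union.mp he with h | h
  · obtain ⟨hr, hi, hs⟩ := (mem_Bfin L r s i).mp h
    simp [z1, hs]
  · obtain ⟨hs, hi, hr⟩ := (mem_B'fin L r s i).mp h
    subst hi
    simp [z1, show (1 : Fin 2) ≠ 0 by decide]

lemma z2_BB : ∀ e ∈ Bfin L ∪ B'fin L, z2 L e = 0 := by
  rintro ⟨⟨r, s⟩, i⟩ he
  rcases Finset.mem_union.mp he with h | h
  · obtain ⟨hr, hi, hs⟩ := (mem_Bfin L r s i).mp h
    subst hi
    simp [z2, show (0 : Fin 2) ≠ 1 by decide]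
  · obtain ⟨hs, hi, hr⟩ := (mem_B'fin L r s i).mp h
    simp [z2, hr]

lemma x1_D : ∀ e ∈ Dfin L, x1 L e = 0 := by
  rintro ⟨⟨r, s⟩, i⟩ he
  obtain ⟨hA1, hA2, hBB, hCC⟩ := Dfin_not L he
  by_cases hr : r = 0
  · by_cases hi : i = 0
    · exfalso
      by_cases hs : s = 1
      · subst hr; subst hs; subst hi; exact hA1 rfl
      · exact hBB (Finset.mem_union_left _ ((mem_Bfin L r s i).mpr ⟨hr, hi, hs⟩))
    · simp [x1, hi]
  · simp [x1, hr]

lemma x2_D : ∀ e ∈ Dfin L, x2 L e = 0 := by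
  rintro ⟨⟨r, s⟩, i⟩ he
  obtain ⟨hA1, hA2, hBB, hCC⟩ := Dfin_not L he
  by_cases hs : s = 0
  · by_cases hi : i = 1
    · exfalso
      by_cases hr : r = 1
      · subst hr; subst hs; subst hi; exact hA2 rfl
      · exact hBB (Finset.mem_union_right _ ((mem_B'fin L r s i).mpr ⟨hs, hi, hr⟩))
    · simp [x2, hi]
  · simp [x2, hs]

lemma z1_D : ∀ e ∈ Dfin L, z1 L e = 0 := by
  rintro ⟨⟨r, s⟩, i⟩ he
  obtain ⟨hA1, hA2, hBB, hCC⟩ := Dfin_not L he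
  by_cases hs : s = 1
  · by_cases hi : i = 0
    · exfalso
      by_cases hr : r = 0
      · subst hr; subst hs; subst hi; exact hA1 rfl
      · exact hCC (Finset.mem_union_left _ ((mem_Cfin L r s i).mpr ⟨hs, hi, hr⟩))
    · simp [z1, hi]
  · simp [z1, hs]

lemma z2_D : ∀ e ∈ Dfin L, z2 L e = 0 := by
  rintro ⟨⟨r, s⟩, i⟩ he
  obtain ⟨hA1, hA2, hBB, hCC⟩ := Dfin_not L he
  by_cases hr : r = 1
  · by_cases hi : i = 1
    · exfalso
      by_cases hs : s = 0
      · subst hr; subst hs; subst hi; exact hA2 rfl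
      · exact hCC (Finset.mem_union_right _ ((mem_C'fin L r s i).mpr ⟨hr, hi, hs⟩))
    · simp [z2, hi]
  · simp [z2, hr]

/-! ### the logical operators in `W`-form -/

noncomputable def c1v : Fin 4 → ℂ := ![1, 1, -Complex.I, 1]

noncomputable def X1v : Fin 4 → (E L → Fin 2) := ![0, x1 L, x1 L, 0]
noncomputable def Z1v : Fin 4 → (E L → Fin 2) := ![0, 0, z1 L, z1 L]
noncomputable def X2v : Fin 4 → (E L → Fin 2) := ![0, x2 L, x2 L, 0]
noncomputable def Z2v : Fin 4 → (E L → Fin 2) := ![0, 0, z2 L, z2 L]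

lemma logical1_eq (a : Fin 4) : logical1 L a = c1v a • W L (X1v L a) (Z1v L a) := by
  fin_cases a
  · show (1 : Op L) = (1 : ℂ) • W L 0 0
    rw [W_one, one_smul]
  · show X1bar L = (1 : ℂ) • W L (x1 L) 0
    rw [X1bar_eq, one_smul]
  · show Complex.I • (X1bar L * Z1bar L) = (-Complex.I) • W L (x1 L) (z1 L)
    rw [X1bar_eq, Z1bar_eq, W_mul, sgn_z1_x1, add_zero, zero_add, smul_smul,
      show Complex.I * (-1 : ℂ) = -Complex.I by ring]
  · show Z1bar L = (1 : ℂ) • W L 0 (z1 L)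
    rw [Z1bar_eq, one_smul]

lemma logical2_eq (b : Fin 4) : logical2 L b = c1v b • W L (X2v L b) (Z2v L b) := by
  fin_cases b
  · show (1 : Op L) = (1 : ℂ) • W L 0 0
    rw [W_one, one_smul]
  · show X2bar L = (1 : ℂ) • W L (x2 L) 0
    rw [X2bar_eq, one_smul]
  · show Complex.I • (X2bar L * Z2bar L) = (-Complex.I) • W L (x2 L) (z2 L)
    rw [X2bar_eq, Z2bar_eq, W_mul, sgn_z2_x2, add_zero, zero_add, smul_smul,
      show Complex.I * (-1 : ℂ) = -Complex.I by ring]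
  · show Z2bar L = (1 : ℂ) • W L 0 (z2 L)
    rw [Z2bar_eq, one_smul]

set_option maxHeartbeats 1000000 in
lemma sgn_cross (a b : Fin 4) : sgn L (Z2v L b) (X1v L a) = 1 := by
  fin_cases a <;> fin_cases b
  exacts [sgn_zero_right L _, sgn_zero_right L _, sgn_zero_right L _, sgn_zero_right L _,
    sgn_zero_left L _, sgn_zero_left L _, sgn_z2_x1 L, sgn_z2_x1 L,
    sgn_zero_left L _, sgn_zero_left L _, sgn_z2_x1 L, sgn_z2_x1 L,
    sgn_zero_right L _, sgn_zero_right L _, sgn_zero_right L _, sgn_zero_right L _]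

lemma logicalP_eq (a b : Fin 4) :
    logicalP L a b = (c1v a * c1v b) • W L (X1v L a + X2v L b) (Z1v L a + Z2v L b) := by
  rw [logicalP, logical1_eq, logical2_eq, smul_mul_smul_comm, W_mul, sgn_cross, one_smul]


lemma X1v_CC (a : Fin 4) : ∀ e ∈ Cfin L ∪ C'fin L, X1v L a e = 0 := by
  fin_cases a
  exacts [fun e _ => rfl, x1_CC L, x1_CC L, fun e _ => rfl]

lemma X1v_D (a : Fin 4) : ∀ e ∈ Dfin L, X1v L a e = 0 := by
  fin_cases a
  exacts [fun e _ => rfl, x1_D L, x1_D L, fun e _ => rfl]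

lemma X2v_CC (b : Fin 4) : ∀ e ∈ Cfin L ∪ C'fin L, X2v L b e = 0 := by
  fin_cases b
  exacts [fun e _ => rfl, x2_CC L, x2_CC L, fun e _ => rfl]

lemma X2v_D (b : Fin 4) : ∀ e ∈ Dfin L, X2v L b e = 0 := by
  fin_cases b
  exacts [fun e _ => rfl, x2_D L, x2_D L, fun e _ => rfl]

lemma Z1v_BB (a : Fin 4) : ∀ e ∈ Bfin L ∪ B'fin L, Z1v L a e = 0 := by
  fin_cases a
  exacts [fun e _ => rfl, fun e _ => rfl, z1_BB L, z1_BB L]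

lemma Z1v_D (a : Fin 4) : ∀ e ∈ Dfin L, Z1v L a e = 0 := by
  fin_cases a
  exacts [fun e _ => rfl, fun e _ => rfl, z1_D L, z1_D L]

lemma Z2v_BB (b : Fin 4) : ∀ e ∈ Bfin L ∪ B'fin L, Z2v L b e = 0 := by
  fin_cases b
  exacts [fun e _ => rfl, fun e _ => rfl, z2_BB L, z2_BB L]

lemma Z2v_D (b : Fin 4) : ∀ e ∈ Dfin L, Z2v L b e = 0 := by
  fin_cases b
  exacts [fun e _ => rfl, fun e _ => rfl, z2_D L, z2_D L]

/-! ### the endgame computation -/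

def xa : Fin 4 → Fin 2 := ![0, 1, 1, 0]
def za : Fin 4 → Fin 2 := ![0, 0, 1, 1]

lemma X1v_A1 (a : Fin 4) : X1v L a (A1 L) = xa a := by
  fin_cases a
  exacts [rfl, x1_A1 L, x1_A1 L, rfl]

lemma X1v_A2 (a : Fin 4) : X1v L a (A2 L) = 0 := by
  fin_cases a
  exacts [rfl, x1_A2 L, x1_A2 L, rfl]

lemma X2v_A1 (b : Fin 4) : X2v L b (A1 L) = 0 := by
  fin_cases b
  exacts [rfl, x2_A1 L, x2_A1 L, rfl]

lemma X2v_A2 (b : Fin 4) : X2v L b (A2 L) = xa b := by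
  fin_cases b
  exacts [rfl, x2_A2 L, x2_A2 L, rfl]

lemma Z1v_A1 (a : Fin 4) : Z1v L a (A1 L) = za a := by
  fin_cases a
  exacts [rfl, rfl, z1_A1 L, z1_A1 L]

lemma Z1v_A2 (a : Fin 4) : Z1v L a (A2 L) = 0 := by
  fin_cases a
  exacts [rfl, rfl, z1_A2 L, z1_A2 L]

lemma Z2v_A1 (b : Fin 4) : Z2v L b (A1 L) = 0 := by
  fin_cases b
  exacts [rfl, rfl, z2_A1 L, z2_A1 L]

lemma Z2v_A2 (b : Fin 4) : Z2v L b (A2 L) = za b := by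
  fin_cases b
  exacts [rfl, rfl, z2_A2 L, z2_A2 L]

lemma XA1 (a b : Fin 4) : (X1v L a + X2v L b) (A1 L) = xa a := by
  rw [Pi.add_apply, X1v_A1, X2v_A1, add_zero]

lemma XA2 (a b : Fin 4) : (X1v L a + X2v L b) (A2 L) = xa b := by
  rw [Pi.add_apply, X1v_A2, X2v_A2, zero_add]

lemma ZA1 (a b : Fin 4) : (Z1v L a + Z2v L b) (A1 L) = za a := by
  rw [Pi.add_apply, Z1v_A1, Z2v_A1, add_zero]

lemma ZA2 (a b : Fin 4) : (Z1v L a + Z2v L b) (A2 L) = za b := by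
  rw [Pi.add_apply, Z1v_A2, Z2v_A2, zero_add]

set_option maxHeartbeats 2000000 in
omit [NeZero L] in
lemma endgame (a b : Fin 4) (Ψ : Fin 2 → Fin 2 → ℂ) :
    (c1v a * c1v b) * (∑ u : Fin 2, ∑ v : Fin 2,
      ((-1:ℂ) ^ ((za a).val * u.val) * (-1:ℂ) ^ ((za b).val * v.val))
      * (Ψ (u + xa a) (v + xa b) * (starRingEnd ℂ) (Ψ u v)))
    = expval Ψ a b := by
  fin_cases a <;> fin_cases b <;>
    simp [c1v, xa, za, expval, pauli, Fin.sum_univ_two, fin2_one_add_one]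
  all_goals try ring
  all_goals (simp [Complex.I_sq]; try ring)

end TP

open Toric in
/-- Preservation of logical information: for every two-qubit Pauli
`P = P₁ ⊗ P₂` with logical counterpart `P̄ = P̄₁P̄₂`, every two-qubit state `|Ψ⟩`,
every density matrix `ρ_D` and every `t ≥ 0`,
`tr(P̄ e^{tL}(ρ₀)) = ⟨Ψ|P|Ψ⟩`. -/
theorem toric_code_preservation_of_logical_information
    (L : ℕ) [NeZero L] (hL : 2 ≤ L)
    (Ψ : Fin 2 → Fin 2 → ℂ) (hΨ : ∑ x : Fin 2, ∑ y : Fin 2, Complex.normSq (Ψ x y) = 1)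
    (ρD : Matrix ({e // e ∈ Dfin L} → Fin 2) ({e // e ∈ Dfin L} → Fin 2) ℂ)
    (hρD : ρD.PosSemidef) (hρDtr : ρD.trace = 1)
    (a b : Fin 4) (t : ℝ) (ht : 0 ≤ t) :
    (logicalP L a b * expL L t (rho0 L Ψ ρD)).trace = expval Ψ a b := by
  rw [TP.trace_expL L (logicalP L a b) (TP.comm_logicalP_stab L a b)
    (TP.comm_logicalP_corr L a b) t (rho0 L Ψ ρD)]
  rw [TP.logicalP_eq L a b, Matrix.smul_mul, Matrix.trace_smul,
    TP.trace_W_rho0 L Ψ ρD hρDtr _ _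
      (fun e he => by rw [Pi.add_apply, TP.X1v_CC L a e he, TP.X2v_CC L b e he, add_zero])
      (fun e he => by rw [Pi.add_apply, TP.X1v_D L a e he, TP.X2v_D L b e he, add_zero])
      (fun e he => by rw [Pi.add_apply, TP.Z1v_BB L a e he, TP.Z2v_BB L b e he, add_zero])
      (fun e he => by rw [Pi.add_apply, TP.Z1v_D L a e he, TP.Z2v_D L b e he, add_zero]),
    smul_eq_mul]
  simp only [TP.XA1 L a b, TP.XA2 L a b, TP.ZA1 L a b, TP.ZA2 L a b]
  exact TP.endgame a b Ψ
end

section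
/- Energy lowering: for every positive semidefinite n×n complex matrix ρ, tr(T(ρ) P⁻) ≤ tr(ρ P⁻). -/
open scoped Matrix ComplexOrder

private lemma psd_trace_nonneg {n : ℕ} {M : Matrix (Fin n) (Fin n) ℂ}
    (h : M.PosSemidef) : 0 ≤ M.trace := by
  rw [Matrix.trace]
  refine Finset.sum_nonneg fun i _ => ?_
  have := h.2 (Finsupp.single i 1)
  simpa [Finsupp.sum_single_index, Matrix.diag] using this

/-- Energy lowering: for the correction map `T(ρ) = P⁺ ρ P⁺ + C P⁻ ρ P⁻ Cᴴ`
(with `S` a Hermitian unitary involution, `C` unitary with `CS = -SC`, `P± = (I ± S)/2`)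
and every positive semidefinite `ρ`, `tr(T(ρ) P⁻) ≤ tr(ρ P⁻)`. -/
theorem correction_map_energy_lowering
    {n : ℕ} (hn : 1 ≤ n)
    (S C Pp Pm : Matrix (Fin n) (Fin n) ℂ)
    (hS : S = Sᴴ) (hS2 : S * S = 1)
    (hC : C * Cᴴ = 1) (hC' : Cᴴ * C = 1) (hCS : C * S = -(S * C))
    (hPp : Pp = (2⁻¹ : ℂ) • (1 + S)) (hPm : Pm = (2⁻¹ : ℂ) • (1 - S))
    (T : Matrix (Fin n) (Fin n) ℂ → Matrix (Fin n) (Fin n) ℂ)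
    (hT : ∀ ρ, T ρ = Pp * ρ * Pp + C * (Pm * ρ * Pm) * Cᴴ)
    (ρ : Matrix (Fin n) (Fin n) ℂ) (hρ : ρ.PosSemidef) :
    (T ρ * Pm).trace ≤ (ρ * Pm).trace := by
  have hPpPm : Pp * Pm = 0 := by
    subst hPp hPm
    rw [Matrix.smul_mul, Matrix.mul_smul, smul_smul]
    have : (1 + S) * (1 - S) = 0 := by
      simp only [mul_sub, add_mul, mul_one, one_mul, hS2]; abel
    rw [this, smul_zero]
  have hPmPp : Pm * Pp = 0 := by
    subst hPp hPm
    rw [Matrix.smul_mul, Matrix.mul_smul, smul_smul]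
    have : (1 - S) * (1 + S) = 0 := by
      simp only [mul_add, sub_mul, mul_one, one_mul, hS2]; abel
    rw [this, smul_zero]
  have hPm2 : Pm * Pm = Pm := by
    subst hPm
    rw [Matrix.smul_mul, Matrix.mul_smul, smul_smul]
    have : (1 - S) * (1 - S) = (2 : ℂ) • (1 - S) := by
      simp only [mul_sub, sub_mul, mul_one, one_mul, hS2, two_smul, smul_sub]
      abel
    rw [this, smul_smul]
    norm_num
  have hPmH : Pmᴴ = Pm := by
    subst hPm
    simp [Matrix.conjTranspose_smul, Matrix.conjTranspose_sub, ← hS]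
  -- Cᴴ * Pm = Pp * Cᴴ
  have hCPm : Cᴴ * Pm = Pp * Cᴴ := by
    subst hPp hPm
    have h1 : C * ((2⁻¹ : ℂ) • (1 + S)) = ((2⁻¹ : ℂ) • (1 - S)) * C := by
      rw [Matrix.mul_smul, Matrix.smul_mul, mul_add, sub_mul, hCS]
      rw [smul_add, smul_sub, mul_one, one_mul]
      module
    have := congrArg Matrix.conjTranspose h1
    simpa [Matrix.conjTranspose_smul, Matrix.conjTranspose_add,
      Matrix.conjTranspose_sub, ← hS, Matrix.conjTranspose_mul] using this.symm
  have hLHS : (T ρ * Pm).trace = 0 := by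
    rw [hT]
    have h1 : Pp * ρ * Pp * Pm = 0 := by
      rw [mul_assoc, hPpPm, mul_zero]
    have h2 : C * (Pm * ρ * Pm) * Cᴴ * Pm = 0 := by
      rw [mul_assoc, hCPm,
        show C * (Pm * ρ * Pm) * (Pp * Cᴴ) = C * (Pm * ρ * (Pm * Pp)) * Cᴴ by
          noncomm_ring, hPmPp]
      simp
    rw [add_mul, h1, h2, add_zero, Matrix.trace_zero]
  rw [hLHS]
  have key : (Pm * ρ * Pm).trace = (ρ * Pm).trace := by
    rw [Matrix.trace_mul_comm, ← mul_assoc, hPm2, Matrix.trace_mul_comm]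
  rw [← key]
  have hpsd : (Pm * ρ * Pmᴴ).PosSemidef := hρ.mul_mul_conjTranspose_same Pm
  simpa [hPmH] using psd_trace_nonneg hpsd
end

section
/- Differential inequality for syndrome occupations: fix j ∈ 𝒮 with C_j S_j = −S_j C_j, and assume that for every k ∈ 𝒮 the unitary C_k either commutes or anticommutes with S_j. Then for every positive semidefinite ρ and every t ≥ 0, (d/dt) tr(P_j⁻ · e^{tL}(ρ)) ≤ − tr(P_j⁻ · e^{tL}(ρ)) + Σ_{k ∈ Pred(j)} tr(P_k⁻ · e^{tL}(ρ)), where Pred(j) = {k ∈ 𝒮 : k ≠ j and C_k S_j = −S_j C_k}. -/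
open scoped Matrix ComplexOrder

attribute [local instance] Matrix.normedAddCommGroup Matrix.normedSpace

/-- Port helper: with the sup-norm matrix instances the topological-ring structure on the
continuous linear endomorphisms (the operator-norm ring) is no longer found by instance search. -/
instance matrixCLMIsTopologicalRing (n : ℕ) :
    IsTopologicalRing (Matrix (Fin n) (Fin n) ℂ →L[ℂ] Matrix (Fin n) (Fin n) ℂ) :=
  letI : NormedRing (Matrix (Fin n) (Fin n) ℂ →L[ℂ] Matrix (Fin n) (Fin n) ℂ) :=
    ContinuousLinearMap.toNormedRing
  @NonUnitalSeminormedRing.toIsTopologicalRing _ inferInstance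

namespace SyndromeAux

variable {n : ℕ}

/-- The set of positive semidefinite matrices is closed. -/
lemma isClosed_posSemidef : IsClosed {A : Matrix (Fin n) (Fin n) ℂ | A.PosSemidef} := by
  have hset : {A : Matrix (Fin n) (Fin n) ℂ | A.PosSemidef} =
      {A : Matrix (Fin n) (Fin n) ℂ | Aᴴ = A} ∩
        ⋂ x : Fin n → ℂ, {A | 0 ≤ dotProduct (star x) (A *ᵥ x)} := by
    ext A
    simp only [Set.mem_setOf_eq, Set.mem_inter_iff, Set.mem_iInter]
    exact Matrix.posSemidef_iff_dotProduct_mulVec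
  rw [hset]
  refine IsClosed.inter (isClosed_eq ?_ continuous_id) (isClosed_iInter fun x => ?_)
  · exact continuous_id.matrix_conjTranspose
  · have hc : Continuous fun A : Matrix (Fin n) (Fin n) ℂ =>
        dotProduct (star x) (A *ᵥ x) :=
      Continuous.dotProduct continuous_const
        (continuous_id.matrix_mulVec continuous_const)
    have hcl : IsClosed {z : ℂ | 0 ≤ z} := by
      have : {z : ℂ | 0 ≤ z} = Complex.re ⁻¹' Set.Ici 0 ∩ Complex.im ⁻¹' {0} := by
        ext z
        simp [Complex.le_def, eq_comm]
      rw [this]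
      exact (isClosed_Ici.preimage Complex.continuous_re).inter
        (isClosed_singleton.preimage Complex.continuous_im)
    exact hcl.preimage hc

lemma posSemidef_real_smul {A : Matrix (Fin n) (Fin n) ℂ} (hA : A.PosSemidef)
    {c : ℝ} (hc : 0 ≤ c) : ((c : ℂ) • A).PosSemidef := by
  refine Matrix.PosSemidef.of_dotProduct_mulVec_nonneg ?_ (fun x => ?_)
  · unfold Matrix.IsHermitian
    rw [Matrix.conjTranspose_smul, hA.1.eq]
    congr 1
    simp [Complex.star_def, Complex.conj_ofReal]
  · rw [Matrix.smul_mulVec, dotProduct_smul, smul_eq_mul]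
    exact mul_nonneg (Complex.zero_le_real.2 hc) (hA.dotProduct_mulVec_nonneg x)

lemma trace_nonneg_of_posSemidef {A : Matrix (Fin n) (Fin n) ℂ} (hA : A.PosSemidef) :
    0 ≤ A.trace := by
  rw [Matrix.trace]
  refine Finset.sum_nonneg fun i _ => ?_
  have h := hA.dotProduct_mulVec_nonneg (Pi.single i 1)
  have heq : dotProduct (star (Pi.single i 1)) (A *ᵥ Pi.single i 1) = A i i := by
    simp [dotProduct, Matrix.mulVec, Pi.single_apply, apply_ite, mul_ite, ite_mul,
      Finset.sum_ite_eq, Finset.sum_ite_eq']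
  rw [heq] at h
  exact h

lemma posSemidef_tsum {g : ℕ → Matrix (Fin n) (Fin n) ℂ} (hg : ∀ m, (g m).PosSemidef)
    (hs : Summable g) : (∑' m, g m).PosSemidef := by
  have ht := hs.hasSum.tendsto_sum_nat
  refine isClosed_posSemidef.mem_of_tendsto ht (Filter.Eventually.of_forall fun N => ?_)
  exact Finset.sum_induction _ _ (fun a b ha hb => ha.add hb) Matrix.PosSemidef.zero
    (fun i _ => hg i)

lemma trace_sandwich (A B D σ : Matrix (Fin n) (Fin n) ℂ) :
    (A * (B * σ * D)).trace = (D * A * B * σ).trace := by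
  have h1 : A * (B * σ * D) = A * B * σ * D := by simp only [mul_assoc]
  rw [h1, Matrix.trace_mul_comm]
  congr 1
  simp only [mul_assoc]

section algebra

variable (a b Ck σ : Matrix (Fin n) (Fin n) ℂ)

lemma Pm_herm (hx : aᴴ = a) : ((2⁻¹ : ℂ) • (1 - a))ᴴ = (2⁻¹ : ℂ) • (1 - a) := by
  rw [Matrix.conjTranspose_smul, Matrix.conjTranspose_sub, Matrix.conjTranspose_one, hx]
  congr 1
  simp [Complex.star_def]

lemma Pp_herm (hx : aᴴ = a) : ((2⁻¹ : ℂ) • (1 + a))ᴴ = (2⁻¹ : ℂ) • (1 + a) := by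
  rw [Matrix.conjTranspose_smul, Matrix.conjTranspose_add, Matrix.conjTranspose_one, hx]
  congr 1
  simp [Complex.star_def]

lemma Pm_idem (hx : a * a = 1) :
    ((2⁻¹ : ℂ) • (1 - a)) * ((2⁻¹ : ℂ) • (1 - a)) = (2⁻¹ : ℂ) • (1 - a) := by
  simp only [Matrix.smul_mul, Matrix.mul_smul, smul_smul, sub_mul, mul_sub, one_mul, mul_one]
  rw [hx]
  module

lemma Pp_idem (hx : a * a = 1) :
    ((2⁻¹ : ℂ) • (1 + a)) * ((2⁻¹ : ℂ) • (1 + a)) = (2⁻¹ : ℂ) • (1 + a) := by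
  simp only [Matrix.smul_mul, Matrix.mul_smul, smul_smul, add_mul, mul_add, one_mul, mul_one]
  rw [hx]
  module

lemma PmPm_comm (hab : a * b = b * a) :
    ((2⁻¹ : ℂ) • (1 - a)) * ((2⁻¹ : ℂ) • (1 - b)) =
      ((2⁻¹ : ℂ) • (1 - b)) * ((2⁻¹ : ℂ) • (1 - a)) := by
  simp only [Matrix.smul_mul, Matrix.mul_smul, smul_smul, sub_mul, mul_sub, one_mul, mul_one]
  rw [hab]
  module

lemma PmPp_comm (hab : a * b = b * a) :
    ((2⁻¹ : ℂ) • (1 - a)) * ((2⁻¹ : ℂ) • (1 + b)) =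
      ((2⁻¹ : ℂ) • (1 + b)) * ((2⁻¹ : ℂ) • (1 - a)) := by
  simp only [Matrix.smul_mul, Matrix.mul_smul, smul_smul, sub_mul, mul_sub, add_mul, mul_add,
    one_mul, mul_one]
  rw [hab]
  module

lemma PpPm_comm (hab : a * b = b * a) :
    ((2⁻¹ : ℂ) • (1 + a)) * ((2⁻¹ : ℂ) • (1 - b)) =
      ((2⁻¹ : ℂ) • (1 - b)) * ((2⁻¹ : ℂ) • (1 + a)) := by
  simp only [Matrix.smul_mul, Matrix.mul_smul, smul_smul, sub_mul, mul_sub, add_mul, mul_add,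
    one_mul, mul_one]
  rw [hab]
  module

lemma Pm_decomp_right :
    ((2⁻¹ : ℂ) • (1 - a)) * ((2⁻¹ : ℂ) • (1 + b)) =
      (2⁻¹ : ℂ) • (1 - a) - ((2⁻¹ : ℂ) • (1 - a)) * ((2⁻¹ : ℂ) • (1 - b)) := by
  simp only [Matrix.smul_mul, Matrix.mul_smul, smul_smul, sub_mul, mul_sub, add_mul, mul_add,
    one_mul, mul_one, smul_sub]
  module

lemma Pp_decomp_left :
    ((2⁻¹ : ℂ) • (1 + a)) * ((2⁻¹ : ℂ) • (1 - b)) =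
      (2⁻¹ : ℂ) • (1 - b) - ((2⁻¹ : ℂ) • (1 - a)) * ((2⁻¹ : ℂ) • (1 - b)) := by
  simp only [Matrix.smul_mul, Matrix.mul_smul, smul_smul, sub_mul, mul_sub, add_mul, mul_add,
    one_mul, mul_one, smul_sub]
  module

/-- conjugation by an anticommuting unitary sends `P⁻` to `P⁺`. -/
lemma conj_anti (haH : aᴴ = a) (hCk : Ckᴴ * Ck = 1) (hanti : Ck * a = -(a * Ck)) :
    Ckᴴ * ((2⁻¹ : ℂ) • (1 - a)) * Ck = (2⁻¹ : ℂ) • (1 + a) := by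
  have h := congrArg Matrix.conjTranspose hanti
  rw [Matrix.conjTranspose_mul, Matrix.conjTranspose_neg, Matrix.conjTranspose_mul, haH] at h
  -- h : a * Ckᴴ = -(Ckᴴ * a)
  have hCk_a : Ckᴴ * a = -(a * Ckᴴ) := by
    have h2 : -(a * Ckᴴ) = Ckᴴ * a := by rw [h, neg_neg]
    exact h2.symm
  calc Ckᴴ * ((2⁻¹ : ℂ) • (1 - a)) * Ck = (2⁻¹ : ℂ) • (Ckᴴ * (1 - a) * Ck) := by
        simp only [Matrix.mul_smul, Matrix.smul_mul]
    _ = (2⁻¹ : ℂ) • (Ckᴴ * Ck - Ckᴴ * a * Ck) := by rw [mul_sub, mul_one, sub_mul]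
    _ = (2⁻¹ : ℂ) • (1 + a) := by
        rw [hCk, hCk_a, neg_mul, mul_assoc, hCk, mul_one, sub_neg_eq_add]

/-- conjugation by a commuting unitary fixes `P⁻`. -/
lemma conj_commute (haH : aᴴ = a) (hCk : Ckᴴ * Ck = 1) (hcomm : Ck * a = a * Ck) :
    Ckᴴ * ((2⁻¹ : ℂ) • (1 - a)) * Ck = (2⁻¹ : ℂ) • (1 - a) := by
  have h := congrArg Matrix.conjTranspose hcomm
  rw [Matrix.conjTranspose_mul, Matrix.conjTranspose_mul, haH] at h
  -- h : a * Ckᴴ = Ckᴴ * a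
  calc Ckᴴ * ((2⁻¹ : ℂ) • (1 - a)) * Ck = (2⁻¹ : ℂ) • (Ckᴴ * (1 - a) * Ck) := by
        simp only [Matrix.mul_smul, Matrix.smul_mul]
    _ = (2⁻¹ : ℂ) • (Ckᴴ * Ck - Ckᴴ * a * Ck) := by rw [mul_sub, mul_one, sub_mul]
    _ = (2⁻¹ : ℂ) • (1 - a) := by
        rw [hCk, ← h, mul_assoc, hCk, mul_one]

lemma term_anti (haH : aᴴ = a) (hb2 : b * b = 1)
    (hab : a * b = b * a) (hCk : Ckᴴ * Ck = 1) (hanti : Ck * a = -(a * Ck)) :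
    (((2⁻¹ : ℂ) • (1 - a)) * (((2⁻¹ : ℂ) • (1 + b)) * σ * ((2⁻¹ : ℂ) • (1 + b)) +
        Ck * (((2⁻¹ : ℂ) • (1 - b)) * σ * ((2⁻¹ : ℂ) • (1 - b))) * Ckᴴ - σ)).trace =
      (((2⁻¹ : ℂ) • (1 - b)) * σ).trace -
        2 * ((((2⁻¹ : ℂ) • (1 - a)) * ((2⁻¹ : ℂ) • (1 - b)) * σ)).trace := by
  set Pma : Matrix (Fin n) (Fin n) ℂ := (2⁻¹ : ℂ) • (1 - a) with hPma
  set Pmb : Matrix (Fin n) (Fin n) ℂ := (2⁻¹ : ℂ) • (1 - b) with hPmb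
  set Ppa : Matrix (Fin n) (Fin n) ℂ := (2⁻¹ : ℂ) • (1 + a) with hPpa
  set Ppb : Matrix (Fin n) (Fin n) ℂ := (2⁻¹ : ℂ) • (1 + b) with hPpb
  have hmain : Pma * (Ppb * σ * Ppb + Ck * (Pmb * σ * Pmb) * Ckᴴ - σ) =
      Pma * (Ppb * σ * Ppb) + Pma * (Ck * (Pmb * σ * Pmb) * Ckᴴ) - Pma * σ := by
    rw [mul_sub, mul_add]
  rw [hmain, Matrix.trace_sub, Matrix.trace_add]
  have t1 : (Pma * (Ppb * σ * Ppb)).trace = ((Pma - Pma * Pmb) * σ).trace := by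
    rw [trace_sandwich]
    have h1 : Ppb * Pma * Ppb = Pma - Pma * Pmb := by
      rw [show Ppb * Pma = Pma * Ppb from (PmPp_comm a b hab).symm, mul_assoc,
        Pp_idem b hb2, Pm_decomp_right a b]
    rw [h1]
  have t2 : (Pma * (Ck * (Pmb * σ * Pmb) * Ckᴴ)).trace = ((Pmb - Pma * Pmb) * σ).trace := by
    have hre : Ck * (Pmb * σ * Pmb) * Ckᴴ = (Ck * Pmb) * σ * (Pmb * Ckᴴ) := by
      simp only [mul_assoc]
    rw [hre, trace_sandwich]
    have h2 : Pmb * Ckᴴ * Pma * (Ck * Pmb) = Pmb - Pma * Pmb := by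
      calc Pmb * Ckᴴ * Pma * (Ck * Pmb) = Pmb * (Ckᴴ * Pma * Ck) * Pmb := by
            simp only [mul_assoc]
        _ = Pmb * Ppa * Pmb := by rw [conj_anti a Ck haH hCk hanti]
        _ = Ppa * Pmb * Pmb := by rw [show Pmb * Ppa = Ppa * Pmb from (PpPm_comm a b hab).symm]
        _ = Ppa * (Pmb * Pmb) := by rw [mul_assoc]
        _ = Pmb - Pma * Pmb := by rw [Pm_idem b hb2, Pp_decomp_left a b]
    rw [h2]
  rw [t1, t2, sub_mul, sub_mul, Matrix.trace_sub, Matrix.trace_sub]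
  ring

lemma term_commute (haH : aᴴ = a) (hb2 : b * b = 1)
    (hab : a * b = b * a) (hCk : Ckᴴ * Ck = 1) (hcomm : Ck * a = a * Ck) :
    (((2⁻¹ : ℂ) • (1 - a)) * (((2⁻¹ : ℂ) • (1 + b)) * σ * ((2⁻¹ : ℂ) • (1 + b)) +
        Ck * (((2⁻¹ : ℂ) • (1 - b)) * σ * ((2⁻¹ : ℂ) • (1 - b))) * Ckᴴ - σ)).trace = 0 := by
  set Pma : Matrix (Fin n) (Fin n) ℂ := (2⁻¹ : ℂ) • (1 - a) with hPma
  set Pmb : Matrix (Fin n) (Fin n) ℂ := (2⁻¹ : ℂ) • (1 - b) with hPmb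
  set Ppb : Matrix (Fin n) (Fin n) ℂ := (2⁻¹ : ℂ) • (1 + b) with hPpb
  have hmain : Pma * (Ppb * σ * Ppb + Ck * (Pmb * σ * Pmb) * Ckᴴ - σ) =
      Pma * (Ppb * σ * Ppb) + Pma * (Ck * (Pmb * σ * Pmb) * Ckᴴ) - Pma * σ := by
    rw [mul_sub, mul_add]
  rw [hmain, Matrix.trace_sub, Matrix.trace_add]
  have t1 : (Pma * (Ppb * σ * Ppb)).trace = ((Pma - Pma * Pmb) * σ).trace := by
    rw [trace_sandwich]
    have h1 : Ppb * Pma * Ppb = Pma - Pma * Pmb := by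
      rw [show Ppb * Pma = Pma * Ppb from (PmPp_comm a b hab).symm, mul_assoc,
        Pp_idem b hb2, Pm_decomp_right a b]
    rw [h1]
  have t2 : (Pma * (Ck * (Pmb * σ * Pmb) * Ckᴴ)).trace = ((Pma * Pmb) * σ).trace := by
    have hre : Ck * (Pmb * σ * Pmb) * Ckᴴ = (Ck * Pmb) * σ * (Pmb * Ckᴴ) := by
      simp only [mul_assoc]
    rw [hre, trace_sandwich]
    have h2 : Pmb * Ckᴴ * Pma * (Ck * Pmb) = Pma * Pmb := by
      calc Pmb * Ckᴴ * Pma * (Ck * Pmb) = Pmb * (Ckᴴ * Pma * Ck) * Pmb := by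
            simp only [mul_assoc]
        _ = Pmb * Pma * Pmb := by rw [conj_commute a Ck haH hCk hcomm]
        _ = Pma * Pmb * Pmb := by rw [show Pmb * Pma = Pma * Pmb from (PmPm_comm a b hab).symm]
        _ = Pma * (Pmb * Pmb) := by rw [mul_assoc]
        _ = Pma * Pmb := by rw [Pm_idem b hb2]
    rw [h2]
  rw [t1, t2, sub_mul, Matrix.trace_sub]
  ring

end algebra

end SyndromeAux

open SyndromeAux

set_option synthInstance.maxHeartbeats 1000000 in
/-- helper instance, found by `inferInstance` but slow to synthesize in context. -/
lemma smulCommClass_clm {n : ℕ} : SMulCommClass ℂ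
    (Matrix (Fin n) (Fin n) ℂ →L[ℂ] Matrix (Fin n) (Fin n) ℂ)
    (Matrix (Fin n) (Fin n) ℂ →L[ℂ] Matrix (Fin n) (Fin n) ℂ) := by
  refine ⟨fun c f g => ?_⟩
  rw [smul_eq_mul, smul_eq_mul]
  ext x
  simp [ContinuousLinearMap.mul_apply]

set_option synthInstance.maxHeartbeats 1000000 in
/-- helper instance, found by `inferInstance` but slow to synthesize in context. -/
lemma isScalarTower_clm {n : ℕ} : IsScalarTower ℂ
    (Matrix (Fin n) (Fin n) ℂ →L[ℂ] Matrix (Fin n) (Fin n) ℂ)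
    (Matrix (Fin n) (Fin n) ℂ →L[ℂ] Matrix (Fin n) (Fin n) ℂ) := by
  refine ⟨fun c f g => ?_⟩
  rw [smul_eq_mul, smul_eq_mul]
  ext x
  simp [ContinuousLinearMap.mul_apply]

attribute [local instance 1100] smulCommClass_clm isScalarTower_clm

set_option maxHeartbeats 2000000
set_option synthInstance.maxHeartbeats 1000000

/-- Differential inequality for syndrome occupations: for the Liouvillian
`L(ρ) = Σ_k (P_k⁺ ρ P_k⁺ + C_k P_k⁻ ρ P_k⁻ C_kᴴ − ρ)` built from pairwise commuting
Hermitian unitary involutions `S_k` and unitaries `C_k`, and a fixed `j` with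
`C_j S_j = −S_j C_j` such that every `C_k` either commutes or anticommutes with `S_j`,
every positive semidefinite `ρ` and `t ≥ 0` satisfy
`(d/dt) tr(P_j⁻ e^{tL}(ρ)) ≤ −tr(P_j⁻ e^{tL}(ρ)) + Σ_{k ∈ Pred(j)} tr(P_k⁻ e^{tL}(ρ))`. -/
theorem syndrome_occupation_differential_inequality
    {n : ℕ} (hn : 1 ≤ n) {ι : Type*} [Fintype ι]
    (S C : ι → Matrix (Fin n) (Fin n) ℂ)
    (hSherm : ∀ k, S k = (S k)ᴴ) (hS2 : ∀ k, S k * S k = 1)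
    (hScomm : ∀ k l, S k * S l = S l * S k)
    (hCU : ∀ k, C k * (C k)ᴴ = 1) (hCU' : ∀ k, (C k)ᴴ * C k = 1)
    (Liou : Matrix (Fin n) (Fin n) ℂ →ₗ[ℂ] Matrix (Fin n) (Fin n) ℂ)
    (hLiou : ∀ ρ, Liou ρ =
      ∑ k, (((2⁻¹ : ℂ) • (1 + S k)) * ρ * ((2⁻¹ : ℂ) • (1 + S k)) +
            C k * (((2⁻¹ : ℂ) • (1 - S k)) * ρ * ((2⁻¹ : ℂ) • (1 - S k))) * (C k)ᴴ - ρ))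
    (j : ι) (hj : C j * S j = -(S j * C j))
    (hcommOrAnti : ∀ k, C k * S j = S j * C k ∨ C k * S j = -(S j * C k))
    (Pred : Finset ι) (hPred : ∀ k, k ∈ Pred ↔ k ≠ j ∧ C k * S j = -(S j * C k))
    (ρ : Matrix (Fin n) (Fin n) ℂ) (hρ : ρ.PosSemidef)
    (t : ℝ) (ht : 0 ≤ t) :
    deriv (fun s : ℝ =>
        (((2⁻¹ : ℂ) • (1 - S j)) *
          (NormedSpace.exp ((s : ℂ) • Liou.toContinuousLinearMap) ρ)).trace) t ≤
      -(((2⁻¹ : ℂ) • (1 - S j)) *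
          (NormedSpace.exp ((t : ℂ) • Liou.toContinuousLinearMap) ρ)).trace +
      ∑ k ∈ Pred, (((2⁻¹ : ℂ) • (1 - S k)) *
          (NormedSpace.exp ((t : ℂ) • Liou.toContinuousLinearMap) ρ)).trace := by
  classical
  letI nr : NormedRing (Matrix (Fin n) (Fin n) ℂ →L[ℂ] Matrix (Fin n) (Fin n) ℂ) :=
    ContinuousLinearMap.toNormedRing
  letI : NormedAlgebra ℂ (Matrix (Fin n) (Fin n) ℂ →L[ℂ] Matrix (Fin n) (Fin n) ℂ) :=
    ContinuousLinearMap.toNormedAlgebra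
  letI : NormedSpace ℝ (Matrix (Fin n) (Fin n) ℂ →L[ℂ] Matrix (Fin n) (Fin n) ℂ) :=
    ContinuousLinearMap.toNormedSpace
  letI : NormedAlgebra ℚ (Matrix (Fin n) (Fin n) ℂ →L[ℂ] Matrix (Fin n) (Fin n) ℂ) :=
    NormedAlgebra.restrictScalars ℚ ℂ _
  haveI hc1 : CompleteSpace (Matrix (Fin n) (Fin n) ℂ →L[ℂ] Matrix (Fin n) (Fin n) ℂ) :=
    FiniteDimensional.complete ℂ _
  haveI : @CompleteSpace (Matrix (Fin n) (Fin n) ℂ →L[ℂ] Matrix (Fin n) (Fin n) ℂ)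
      nr.toSeminormedRing.toPseudoMetricSpace.toUniformSpace := hc1
  haveI : IsScalarTower ℝ ℂ (Matrix (Fin n) (Fin n) ℂ →L[ℂ] Matrix (Fin n) (Fin n) ℂ) :=
    ⟨fun a b f => by
      ext x : 1; simp [ContinuousLinearMap.smul_apply]; rw [mul_smul]; exact algebraMap_smul ℂ a _⟩
  haveI : ContinuousSMul ℝ (Matrix (Fin n) (Fin n) ℂ →L[ℂ] Matrix (Fin n) (Fin n) ℂ) :=
    @IsBoundedSMul.continuousSMul _ _ _ _ _ _ _ NormedSpace.toIsBoundedSMul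
  set T := Liou.toContinuousLinearMap with hT
  have hsmul : ∀ s : ℝ, ((s : ℂ) • T) = s • T := fun s => by
    exact algebraMap_smul ℂ s T
  set σ : Matrix (Fin n) (Fin n) ℂ := NormedSpace.exp ((t : ℂ) • T) ρ with hσdef
  -- ### Positivity of σ
  have hσpos : σ.PosSemidef := by
    set Φ : Matrix (Fin n) (Fin n) ℂ →L[ℂ] Matrix (Fin n) (Fin n) ℂ :=
      T + (Fintype.card ι : ℂ) • 1 with hΦ
    -- Φ preserves positive semidefiniteness
    have hΦpos : ∀ τ : Matrix (Fin n) (Fin n) ℂ, τ.PosSemidef → (Φ τ).PosSemidef := by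
      intro τ hτ
      have hΦτ : Φ τ = ∑ k, (((2⁻¹ : ℂ) • (1 + S k)) * τ * ((2⁻¹ : ℂ) • (1 + S k)) +
          (C k * ((2⁻¹ : ℂ) • (1 - S k))) * τ * (C k * ((2⁻¹ : ℂ) • (1 - S k)))ᴴ) := by
        have h0 : Φ τ = Liou τ + (Fintype.card ι : ℂ) • τ := by
          simp [hΦ, hT, ContinuousLinearMap.add_apply]
        rw [h0, hLiou τ, Finset.sum_sub_distrib, Finset.sum_const, Finset.card_univ,
          ← Nat.cast_smul_eq_nsmul ℂ, sub_add_cancel]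
        refine Finset.sum_congr rfl fun k _ => ?_
        congr 1
        rw [Matrix.conjTranspose_mul, Pm_herm (S k) (hSherm k).symm]
        simp only [mul_assoc]
      rw [hΦτ]
      refine Finset.sum_induction _ _ (fun a b ha hb => ha.add hb) Matrix.PosSemidef.zero
        (fun k _ => ?_)
      refine Matrix.PosSemidef.add ?_ (hτ.mul_mul_conjTranspose_same _)
      have := hτ.mul_mul_conjTranspose_same ((2⁻¹ : ℂ) • (1 + S k))
      rwa [Pp_herm (S k) (hSherm k).symm] at this
    -- powers of Φ preserve positivity
    have hΦpow : ∀ m : ℕ, ∀ τ : Matrix (Fin n) (Fin n) ℂ, τ.PosSemidef →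
        ((Φ ^ m) τ).PosSemidef := by
      intro m
      induction m with
      | zero => intro τ hτ; simpa using hτ
      | succ m ih =>
          intro τ hτ
          rw [pow_succ']
          exact hΦpos _ (ih τ hτ)
    -- split the exponential
    set z : ℂ := ((-(t * (Fintype.card ι : ℝ)) : ℝ) : ℂ) with hz
    have hAB : (t : ℂ) • T = (t : ℂ) • Φ + z • (1 : Matrix (Fin n) (Fin n) ℂ →L[ℂ]
        Matrix (Fin n) (Fin n) ℂ) := by
      rw [hΦ, hz]
      push_cast
      module
    have halg : z • (1 : Matrix (Fin n) (Fin n) ℂ →L[ℂ] Matrix (Fin n) (Fin n) ℂ) =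
        algebraMap ℂ _ z := (Algebra.algebraMap_eq_smul_one z).symm
    have hcomm : Commute ((t : ℂ) • Φ)
        (z • (1 : Matrix (Fin n) (Fin n) ℂ →L[ℂ] Matrix (Fin n) (Fin n) ℂ)) := by
      rw [halg]
      exact (Algebra.commutes z _).symm
    have hsplit : NormedSpace.exp ((t : ℂ) • T) =
        NormedSpace.exp ((t : ℂ) • Φ) * NormedSpace.exp (z • 1) := by
      rw [hAB]
      exact NormedSpace.exp_add_of_commute hcomm
    have hexpz : NormedSpace.exp (z • (1 : Matrix (Fin n) (Fin n) ℂ →L[ℂ]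
        Matrix (Fin n) (Fin n) ℂ)) = Complex.exp z • 1 := by
      rw [show z • (1 : Matrix (Fin n) (Fin n) ℂ →L[ℂ] Matrix (Fin n) (Fin n) ℂ) =
          algebraMap ℂ _ z from (Algebra.algebraMap_eq_smul_one z).symm]
      erw [← NormedSpace.algebraMap_exp_comm]
      rw [← Complex.exp_eq_exp_ℂ, Algebra.algebraMap_eq_smul_one]
      rfl
    -- positivity of exp((t:ℂ)•Φ) ρ
    have hsumm := NormedSpace.expSeries_summable' (𝕂 := ℂ) ((t : ℂ) • Φ)
    have happ : NormedSpace.exp ((t : ℂ) • Φ) ρ =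
        ∑' m : ℕ, (((m.factorial : ℂ))⁻¹ • ((t : ℂ) • Φ) ^ m) ρ := by
      rw [NormedSpace.exp_eq_tsum (𝕂 := ℂ)]
      exact ((ContinuousLinearMap.apply ℂ (Matrix (Fin n) (Fin n) ℂ) ρ).map_tsum hsumm)
    have happly : ∀ (m : ℕ) (τ : Matrix (Fin n) (Fin n) ℂ),
        (((t : ℂ) • Φ) ^ m) τ = (t : ℂ) ^ m • ((Φ ^ m) τ) := by
      intro m
      induction m with
      | zero => intro τ; simp
      | succ m ih =>
          intro τ
          simp only [pow_succ, ContinuousLinearMap.mul_apply, ContinuousLinearMap.smul_apply,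
            map_smul, ih, smul_smul]
    have hterm : ∀ m : ℕ, (((m.factorial : ℂ))⁻¹ • ((t : ℂ) • Φ) ^ m) ρ =
        ((((m.factorial : ℝ))⁻¹ * t ^ m : ℝ) : ℂ) • ((Φ ^ m) ρ) := by
      intro m
      rw [ContinuousLinearMap.smul_apply, happly m ρ, smul_smul]
      congr 1
      push_cast
      ring
    have hsumm2 : Summable fun m : ℕ => (((m.factorial : ℂ))⁻¹ • ((t : ℂ) • Φ) ^ m) ρ := by
      have := hsumm.map
        (ContinuousLinearMap.apply ℂ (Matrix (Fin n) (Fin n) ℂ) ρ).toLinearMap.toAddMonoidHom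
        (ContinuousLinearMap.apply ℂ (Matrix (Fin n) (Fin n) ℂ) ρ).continuous
      exact this
    have hexpΦρ : (NormedSpace.exp ((t : ℂ) • Φ) ρ).PosSemidef := by
      rw [happ]
      refine posSemidef_tsum (fun m => ?_) hsumm2
      rw [hterm m]
      refine posSemidef_real_smul (hΦpow m ρ hρ) ?_
      exact mul_nonneg (inv_nonneg.2 (Nat.cast_nonneg _)) (pow_nonneg ht m)
    -- assemble
    have hσeq : σ = Complex.exp z • (NormedSpace.exp ((t : ℂ) • Φ) ρ) := by
      rw [hσdef, hsplit, ContinuousLinearMap.mul_apply, hexpz]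
      simp [ContinuousLinearMap.smul_apply, map_smul]
    rw [hσeq, show Complex.exp z = ((Real.exp (-(t * (Fintype.card ι : ℝ))) : ℝ) : ℂ) by
      rw [hz, Complex.ofReal_exp]]
    exact posSemidef_real_smul hexpΦρ (Real.exp_nonneg _)
  -- ### The derivative
  have hcont : Continuous fun F : Matrix (Fin n) (Fin n) ℂ →L[ℂ] Matrix (Fin n) (Fin n) ℂ =>
      (((2⁻¹ : ℂ) • (1 - S j)) * (F ρ)).trace :=
    (continuous_const.matrix_mul
      (ContinuousLinearMap.apply ℂ (Matrix (Fin n) (Fin n) ℂ) ρ).continuous).matrix_trace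
  let φ : (Matrix (Fin n) (Fin n) ℂ →L[ℂ] Matrix (Fin n) (Fin n) ℂ) →L[ℝ] ℂ :=
  { toFun := fun F => (((2⁻¹ : ℂ) • (1 - S j)) * (F ρ)).trace
    map_add' := by
      intro F G
      simp [ContinuousLinearMap.add_apply, mul_add, Matrix.trace_add]
    map_smul' := by
      intro c F
      simp [ContinuousLinearMap.smul_apply, Matrix.mul_smul, Matrix.trace_smul]
    cont := hcont }
  have hgc : HasDerivAt (fun u : ℂ => NormedSpace.exp (u • T))
      (NormedSpace.exp ((t : ℂ) • T) * T) (t : ℂ) :=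
    hasDerivAt_exp_smul_const (𝕂 := ℂ) T (t : ℂ)
  have hgr : HasDerivAt (fun s : ℝ => NormedSpace.exp ((s : ℂ) • T))
      (NormedSpace.exp ((t : ℂ) • T) * T) t := by
    have hOf : HasDerivAt (fun s : ℝ => (s : ℂ)) 1 t := Complex.ofRealCLM.hasDerivAt
    have h := @HasDerivAt.scomp _ _ _ _ _ t _ _ _ _ (by
      constructor; intro a b f; ext x : 1; simp
      change ((a : ℂ) * b) • f x = a • (b • f x)
      rw [mul_smul]; exact algebraMap_smul ℂ a _)
      _ _ (fun u : ℂ => NormedSpace.exp (u • T)) _ hgc hOf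
    exact h.congr_deriv (one_smul ℂ (NormedSpace.exp ((t : ℂ) • T) * T))
  have hD : HasDerivAt (fun s : ℝ => φ (NormedSpace.exp ((s : ℂ) • T)))
      (φ (NormedSpace.exp ((t : ℂ) • T) * T)) t :=
    φ.hasFDerivAt.comp_hasDerivAt t hgr
  have hTcomm : NormedSpace.exp ((t : ℂ) • T) * T = T * NormedSpace.exp ((t : ℂ) • T) :=
    (((Commute.refl T).smul_left (t : ℂ)).exp_left).eq
  have hderiv : deriv (fun s : ℝ => (((2⁻¹ : ℂ) • (1 - S j)) *
      (NormedSpace.exp ((s : ℂ) • T) ρ)).trace) t =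
      (((2⁻¹ : ℂ) • (1 - S j)) * (Liou σ)).trace := by
    rw [show (fun s : ℝ => (((2⁻¹ : ℂ) • (1 - S j)) *
        (NormedSpace.exp ((s : ℂ) • T) ρ)).trace) =
        fun s : ℝ => φ (NormedSpace.exp ((s : ℂ) • T)) from rfl, hD.deriv]
    show (((2⁻¹ : ℂ) • (1 - S j)) * ((NormedSpace.exp ((t : ℂ) • T) * T) ρ)).trace = _
    rw [hTcomm, ContinuousLinearMap.mul_apply]
    rfl
  -- ### The algebraic identity for the derivative
  have hqnn : ∀ k : ι, 0 ≤ ((((2⁻¹ : ℂ) • (1 - S j)) * ((2⁻¹ : ℂ) • (1 - S k)) * σ)).trace := by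
    intro k
    set Q : Matrix (Fin n) (Fin n) ℂ := ((2⁻¹ : ℂ) • (1 - S j)) * ((2⁻¹ : ℂ) • (1 - S k))
      with hQ
    have hQH : Qᴴ = Q := by
      rw [hQ, Matrix.conjTranspose_mul, Pm_herm (S j) (hSherm j).symm,
        Pm_herm (S k) (hSherm k).symm, ← PmPm_comm (S j) (S k) (hScomm j k)]
    have hQidem : Q * Q = Q := by
      rw [hQ]
      calc ((2⁻¹ : ℂ) • (1 - S j)) * ((2⁻¹ : ℂ) • (1 - S k)) *
            (((2⁻¹ : ℂ) • (1 - S j)) * ((2⁻¹ : ℂ) • (1 - S k)))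
          = ((2⁻¹ : ℂ) • (1 - S j)) * (((2⁻¹ : ℂ) • (1 - S k)) * ((2⁻¹ : ℂ) • (1 - S j))) *
            ((2⁻¹ : ℂ) • (1 - S k)) := by simp only [mul_assoc]
        _ = ((2⁻¹ : ℂ) • (1 - S j)) * (((2⁻¹ : ℂ) • (1 - S j)) * ((2⁻¹ : ℂ) • (1 - S k))) *
            ((2⁻¹ : ℂ) • (1 - S k)) := by rw [← PmPm_comm (S j) (S k) (hScomm j k)]
        _ = (((2⁻¹ : ℂ) • (1 - S j)) * ((2⁻¹ : ℂ) • (1 - S j))) *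
            (((2⁻¹ : ℂ) • (1 - S k)) * ((2⁻¹ : ℂ) • (1 - S k))) := by simp only [mul_assoc]
        _ = ((2⁻¹ : ℂ) • (1 - S j)) * ((2⁻¹ : ℂ) • (1 - S k)) := by
            rw [Pm_idem (S j) (hS2 j), Pm_idem (S k) (hS2 k)]
    have hcyc : (Q * σ * Q).trace = (Q * σ).trace := by
      rw [Matrix.trace_mul_cycle, hQidem]
    have h0 : 0 ≤ (Q * σ * Qᴴ).trace :=
      trace_nonneg_of_posSemidef (hσpos.mul_mul_conjTranspose_same Q)
    rw [hQH, hcyc] at h0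
    exact h0
  -- rewrite the derivative
  rw [hderiv, hLiou σ, Finset.mul_sum, Matrix.trace_sum]
  have hterm : ∀ k : ι,
      (((2⁻¹ : ℂ) • (1 - S j)) * (((2⁻¹ : ℂ) • (1 + S k)) * σ * ((2⁻¹ : ℂ) • (1 + S k)) +
          C k * (((2⁻¹ : ℂ) • (1 - S k)) * σ * ((2⁻¹ : ℂ) • (1 - S k))) * (C k)ᴴ - σ)).trace =
        (if k ∈ Pred then ((((2⁻¹ : ℂ) • (1 - S k)) * σ).trace -
            2 * ((((2⁻¹ : ℂ) • (1 - S j)) * ((2⁻¹ : ℂ) • (1 - S k)) * σ)).trace) else 0) +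
        (if k = j then -((((2⁻¹ : ℂ) • (1 - S j)) * σ).trace) else 0) := by
    intro k
    by_cases hkj : k = j
    · subst hkj
      have hknot : k ∉ Pred := fun hmem => ((hPred k).1 hmem).1 rfl
      rw [if_neg hknot, if_pos rfl, zero_add]
      rw [term_anti (S k) (S k) (C k) σ (hSherm k).symm (hS2 k) rfl (hCU' k) hj]
      rw [Pm_idem (S k) (hS2 k)]
      ring
    · by_cases hmem : k ∈ Pred
      · rw [if_pos hmem, if_neg hkj, add_zero]
        exact term_anti (S j) (S k) (C k) σ (hSherm j).symm (hS2 k) (hScomm j k) (hCU' k)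
          ((hPred k).1 hmem).2
      · rw [if_neg hmem, if_neg hkj, add_zero]
        rcases hcommOrAnti k with hcase | hcase
        · exact term_commute (S j) (S k) (C k) σ (hSherm j).symm (hS2 k) (hScomm j k)
            (hCU' k) hcase
        · exact absurd ((hPred k).2 ⟨hkj, hcase⟩) hmem
  rw [Finset.sum_congr rfl (fun k _ => hterm k), Finset.sum_add_distrib,
    Finset.sum_ite_mem, Finset.univ_inter, Finset.sum_ite_eq' Finset.univ j, if_pos
    (Finset.mem_univ j), add_comm]
  refine add_le_add_right (Finset.sum_le_sum fun k _ => ?_) _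
  refine sub_le_self _ ?_
  rw [two_mul]
  exact add_nonneg (hqnn k) (hqnn k)
end
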